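/- arXiv:1402.2262 — 5 statements merged into one kernel-verified Lean document; each statement's English description precedes it below -/
import Mathlib

section
/- Let ]a, b[ be an open interval contained in ℝ \ (U_ν ∪ supp(ν)). Then Ψ_ν coincides with H_ν on ]a, b[ and is strictly increasing on ]a, b[. -/
open MeasureTheory Filter Topology Set

/-- `v_μ(u) = inf {v ≥ 0 : ∫ dμ(x)/((u−x)² + v²) ≤ 1}`. -/
noncomputable def vF (μ : Measure ℝ) (u : ℝ) : ℝ :=
  sInf {v : ℝ | 0 ≤ v ∧ ∫ x, ((u - x) ^ 2 + v ^ 2)⁻¹ ∂μ ≤ 1}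

/-- `U_μ = {t : v_μ(t) > 0}`. -/
def USet (μ : Measure ℝ) : Set ℝ := {t | 0 < vF μ t}

/-- `H_μ(z) = z + ∫ dμ(x)/(z−x)`. -/
noncomputable def HF (μ : Measure ℝ) (z : ℝ) : ℝ := z + ∫ x, (z - x)⁻¹ ∂μ

/-- `Ψ_μ(t) = t + ∫ (t−x) dμ(x)/((t−x)² + v_μ(t)²)`. -/
noncomputable def PsiF (μ : Measure ℝ) (t : ℝ) : ℝ :=
  t + ∫ x, (t - x) / ((t - x) ^ 2 + vF μ t ^ 2) ∂μ

/-- The (topological) support of a measure on ℝ. -/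
def MeasSupp (μ : Measure ℝ) : Set ℝ := {x | ∀ U ∈ nhds x, μ U ≠ 0}

lemma null_of_compl_supp (ν : Measure ℝ) {s : Set ℝ} (hs : s ⊆ (MeasSupp ν)ᶜ) : ν s = 0 := by
  have h : ∀ x : s, ∃ U : Set ℝ, IsOpen U ∧ (x : ℝ) ∈ U ∧ ν U = 0 := by
    rintro ⟨x, hx⟩
    have hx' : ¬ ∀ U ∈ nhds x, ν U ≠ 0 := hs hx
    push_neg at hx'
    obtain ⟨U, hU, hU0⟩ := hx'
    exact ⟨interior U, isOpen_interior, mem_interior_iff_mem_nhds.2 hU,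
      measure_mono_null interior_subset hU0⟩
  choose U hUo hUx hU0 using h
  obtain ⟨T, hTc, hTU⟩ := TopologicalSpace.isOpen_iUnion_countable U hUo
  have hsub : s ⊆ ⋃ i ∈ T, U i := by
    rw [hTU]; intro x hx; exact mem_iUnion.2 ⟨⟨x, hx⟩, hUx _⟩
  exact measure_mono_null hsub ((measure_biUnion_null_iff hTc).2 fun i _ => hU0 i)

lemma meas_aux (t v : ℝ) (ν : Measure ℝ) :
    AEStronglyMeasurable (fun x : ℝ => ((t - x) ^ 2 + v ^ 2)⁻¹) ν :=
  ((((measurable_const.sub measurable_id).pow_const 2).add_const (v ^ 2)).inv).aestronglyMeasurable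

lemma key_int_le_one (ν : Measure ℝ) [IsProbabilityMeasure ν] {t c : ℝ} (hc : 0 < c)
    (hae : ∀ᵐ x ∂ν, c ≤ |t - x|) (hv : vF ν t = 0) :
    ∫ x, ((t - x) ^ 2)⁻¹ ∂ν ≤ 1 := by
  have hint : ∀ v : ℝ, Integrable (fun x => ((t - x) ^ 2 + v ^ 2)⁻¹) ν := by
    intro v
    refine Integrable.mono' (integrable_const ((c ^ 2)⁻¹)) (meas_aux t v ν) ?_
    filter_upwards [hae] with x hx
    rw [Real.norm_eq_abs, abs_of_nonneg (by positivity)]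
    apply inv_anti₀ (by positivity)
    nlinarith [sq_abs (t - x), pow_le_pow_left₀ hc.le hx 2]
  have hint0 : Integrable (fun x => ((t - x) ^ 2)⁻¹) ν := by simpa using hint 0
  have h1S : (1 : ℝ) ∈ {v : ℝ | 0 ≤ v ∧ ∫ x, ((t - x) ^ 2 + v ^ 2)⁻¹ ∂ν ≤ 1} := by
    refine ⟨zero_le_one, ?_⟩
    calc ∫ x, ((t - x) ^ 2 + 1 ^ 2)⁻¹ ∂ν ≤ ∫ _x, (1 : ℝ) ∂ν := by
          apply integral_mono (hint 1) (integrable_const 1)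
          intro x
          exact inv_le_one_of_one_le₀ (by nlinarith [sq_nonneg (t - x)])
      _ = 1 := by simp
  refine _root_.le_of_forall_pos_le_add fun δ hδ => ?_
  have hbdd : BddBelow {v : ℝ | 0 ≤ v ∧ ∫ x, ((t - x) ^ 2 + v ^ 2)⁻¹ ∂ν ≤ 1} :=
    ⟨0, fun v hv => hv.1⟩
  have hlt : sInf {v : ℝ | 0 ≤ v ∧ ∫ x, ((t - x) ^ 2 + v ^ 2)⁻¹ ∂ν ≤ 1} < c ^ 2 * Real.sqrt δ := by
    have : vF ν t < c ^ 2 * Real.sqrt δ := by rw [hv]; positivity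
    exact this
  obtain ⟨v, hvS, hvε⟩ := (csInf_lt_iff hbdd ⟨1, h1S⟩).1 hlt
  obtain ⟨hv0, hvint⟩ := hvS
  have hvsq : v ^ 2 < c ^ 4 * δ := by
    have h1 : v ^ 2 < (c ^ 2 * Real.sqrt δ) ^ 2 := by nlinarith [Real.sqrt_nonneg δ]
    have h2 : (c ^ 2 * Real.sqrt δ) ^ 2 = c ^ 4 * δ := by
      rw [mul_pow, Real.sq_sqrt hδ.le]; ring
    linarith
  have hptle : ∀ᵐ x ∂ν, ((t - x) ^ 2)⁻¹ ≤ ((t - x) ^ 2 + v ^ 2)⁻¹ + δ := by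
    filter_upwards [hae] with x hx
    have hA : c ^ 2 ≤ (t - x) ^ 2 := by
      nlinarith [sq_abs (t - x), pow_le_pow_left₀ hc.le hx 2]
    have hA0 : 0 < (t - x) ^ 2 := lt_of_lt_of_le (by positivity) hA
    have hsum : 0 < (t - x) ^ 2 + v ^ 2 := by positivity
    have hid : ((t - x) ^ 2)⁻¹
        = ((t - x) ^ 2 + v ^ 2)⁻¹ + v ^ 2 / ((t - x) ^ 2 * ((t - x) ^ 2 + v ^ 2)) := by
      field_simp
      rw [add_div, div_self (ne_of_gt hA0)]
    rw [hid]
    have h3 : v ^ 2 / ((t - x) ^ 2 * ((t - x) ^ 2 + v ^ 2)) ≤ v ^ 2 / (c ^ 2 * c ^ 2) := by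
      gcongr
      nlinarith
    have h4 : v ^ 2 / (c ^ 2 * c ^ 2) < δ := by
      rw [div_lt_iff₀ (by positivity)]
      nlinarith
    linarith
  calc ∫ x, ((t - x) ^ 2)⁻¹ ∂ν ≤ ∫ x, (((t - x) ^ 2 + v ^ 2)⁻¹ + δ) ∂ν :=
        integral_mono_ae hint0 ((hint v).add (integrable_const δ)) hptle
    _ = (∫ x, ((t - x) ^ 2 + v ^ 2)⁻¹ ∂ν) + δ := by
        rw [integral_add (hint v) (integrable_const δ)]; simp
    _ ≤ 1 + δ := by linarith

/-- On an open interval `]a,b[` contained in the complement of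
`U_ν ∪ supp(ν)`, the map `Ψ_ν` coincides with `H_ν` and is strictly increasing. -/
theorem stmt3 (ν : Measure ℝ) [IsProbabilityMeasure ν] (hcomp : IsCompact (MeasSupp ν))
    (a b : ℝ) (hab : Set.Ioo a b ⊆ (USet ν ∪ MeasSupp ν)ᶜ) :
    (∀ t ∈ Set.Ioo a b, PsiF ν t = HF ν t) ∧ StrictMonoOn (PsiF ν) (Set.Ioo a b) := by
  have hnull : ν (Set.Ioo a b) = 0 :=
    null_of_compl_supp ν (fun x hx h => (hab hx) (Or.inr h))
  have haeI : ∀ᵐ x ∂ν, x ∉ Set.Ioo a b := by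
    rw [ae_iff]
    convert hnull using 2
    ext x; simp
  have hvF : ∀ t ∈ Set.Ioo a b, vF ν t = 0 := by
    intro t ht
    have h1 : ¬ (0 < vF ν t) := fun h => (hab ht) (Or.inl h)
    have h2 : 0 ≤ vF ν t := Real.sInf_nonneg (fun x hx => hx.1)
    linarith
  have hPsiH : ∀ t ∈ Set.Ioo a b, PsiF ν t = HF ν t := by
    intro t ht
    have hdiv : ∀ u : ℝ, u / (u ^ 2 + 0 ^ 2) = u⁻¹ := by
      intro u
      rcases eq_or_ne u 0 with h | h
      · simp [h]
      · field_simp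
        ring
    unfold PsiF HF
    rw [hvF t ht]
    simp only [hdiv]
  refine ⟨hPsiH, ?_⟩
  -- generic facts per point of the interval
  have hC : ∀ p ∈ Set.Ioo a b, 0 < min (p - a) (b - p) := fun p hp =>
    lt_min (by linarith [hp.1]) (by linarith [hp.2])
  have hbd : ∀ p ∈ Set.Ioo a b, ∀ x : ℝ, x ∉ Set.Ioo a b → min (p - a) (b - p) ≤ |p - x| := by
    intro p hp x hx
    rw [Set.mem_Ioo, not_and_or, not_lt, not_lt] at hx
    rcases hx with h | h
    · exact le_trans (le_trans (min_le_left _ _) (by linarith)) (le_abs_self _)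
    · exact le_trans (le_trans (min_le_right _ _) (by linarith : b - p ≤ -(p - x))) (neg_le_abs _)
  have haeC : ∀ p ∈ Set.Ioo a b, ∀ᵐ x ∂ν, min (p - a) (b - p) ≤ |p - x| := fun p hp =>
    haeI.mono fun x hx => hbd p hp x hx
  have hfint : ∀ p ∈ Set.Ioo a b, Integrable (fun x => ((p - x) ^ 2)⁻¹) ν := by
    intro p hp
    refine Integrable.mono' (integrable_const (((min (p - a) (b - p)) ^ 2)⁻¹))
      (by simpa using meas_aux p 0 ν) ?_
    filter_upwards [haeC p hp] with x hx
    rw [Real.norm_eq_abs, abs_of_nonneg (by positivity)]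
    apply inv_anti₀ (pow_pos (hC p hp) 2)
    nlinarith [sq_abs (p - x), pow_le_pow_left₀ (hC p hp).le hx 2]
  have hinv : ∀ p ∈ Set.Ioo a b, Integrable (fun x => (p - x)⁻¹) ν := by
    intro p hp
    refine Integrable.mono' (integrable_const (((min (p - a) (b - p)))⁻¹))
      ((measurable_const.sub measurable_id).inv.aestronglyMeasurable) ?_
    filter_upwards [haeC p hp] with x hx
    rw [Real.norm_eq_abs, abs_inv]
    exact inv_anti₀ (hC p hp) hx
  have hIle : ∀ p ∈ Set.Ioo a b, ∫ x, ((p - x) ^ 2)⁻¹ ∂ν ≤ 1 := fun p hp =>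
    key_int_le_one ν (hC p hp) (haeC p hp) (hvF p hp)
  intro s hs t ht hst
  rw [hPsiH s hs, hPsiH t ht]
  set K : ℝ → ℝ := fun x => ((t - x) * (s - x))⁻¹ with hK
  have hKmeas : AEStronglyMeasurable K ν :=
    (((measurable_const.sub measurable_id).mul
      (measurable_const.sub measurable_id)).inv).aestronglyMeasurable
  have hKint : Integrable K ν := by
    refine Integrable.mono'
      (integrable_const ((min (t - a) (b - t) * min (s - a) (b - s))⁻¹)) hKmeas ?_
    filter_upwards [haeC t ht, haeC s hs] with x hxt hxs
    rw [Real.norm_eq_abs, abs_inv, abs_mul]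
    apply inv_anti₀ (mul_pos (hC t ht) (hC s hs))
    exact mul_le_mul hxt hxs (hC s hs).le (abs_nonneg _)
  set g : ℝ → ℝ := fun x => (((t - x) ^ 2)⁻¹ + ((s - x) ^ 2)⁻¹) / 2 with hg
  have hgint : Integrable g ν := ((hfint t ht).add (hfint s hs)).div_const 2
  have hKg : ∀ᵐ x ∂ν, K x < g x := by
    filter_upwards [haeC t ht, haeC s hs] with x hxt hxs
    have hpt : t - x ≠ 0 := by
      intro h; rw [h, abs_zero] at hxt; linarith [hC t ht]
    have hqs : s - x ≠ 0 := by
      intro h; rw [h, abs_zero] at hxs; linarith [hC s hs]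
    have hne : (t - x)⁻¹ - (s - x)⁻¹ ≠ 0 := by
      intro h
      have h2 : (t - x)⁻¹ = (s - x)⁻¹ := by linarith [sub_eq_zero.1 h]
      have := inv_injective h2
      have : t = s := by linarith
      linarith
    have h2 : 0 < ((t - x)⁻¹ - (s - x)⁻¹) ^ 2 :=
      lt_of_le_of_ne (sq_nonneg _) (Ne.symm (pow_ne_zero 2 hne))
    show ((t - x) * (s - x))⁻¹ < (((t - x) ^ 2)⁻¹ + ((s - x) ^ 2)⁻¹) / 2
    rw [mul_inv, ← inv_pow, ← inv_pow]
    nlinarith [h2]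
  have hKlt : ∫ x, K x ∂ν < 1 := by
    have hpos : 0 < ∫ x, (g x - K x) ∂ν := by
      rw [integral_pos_iff_support_of_nonneg_ae
        (hKg.mono fun x hx => le_of_lt (sub_pos.2 hx)) (hgint.sub hKint)]
      have hcompl : ν (Function.support (fun x => g x - K x))ᶜ = 0 := by
        apply measure_mono_null (t := {x | ¬ K x < g x})
        · intro x hx
          simp only [Function.mem_support, not_not, mem_compl_iff] at hx
          simp only [mem_setOf_eq, not_lt]
          linarith [sub_eq_zero.1 hx]
        · rw [← ae_iff] at *
          exact hKg.mono fun x hx => hx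
      by_contra hle
      push_neg at hle
      have h0 : ν (Function.support (fun x => g x - K x)) = 0 := le_antisymm hle zero_le
      have huniv : ν Set.univ = 0 := by
        have := measure_union_le (μ := ν) (Function.support (fun x => g x - K x))
          (Function.support (fun x => g x - K x))ᶜ
        rw [Set.union_compl_self, h0, hcompl] at this
        simpa using this
      simp [measure_univ] at huniv
    have hsplit : ∫ x, (g x - K x) ∂ν = ∫ x, g x ∂ν - ∫ x, K x ∂ν :=
      integral_sub hgint hKint
    have hgle : ∫ x, g x ∂ν ≤ 1 := by
      have : ∫ x, g x ∂ν = ((∫ x, ((t - x) ^ 2)⁻¹ ∂ν) + ∫ x, ((s - x) ^ 2)⁻¹ ∂ν) / 2 := by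
        simp only [hg]
        rw [integral_div, integral_add (hfint t ht) (hfint s hs)]
      rw [this]
      linarith [hIle t ht, hIle s hs]
    linarith
  have hid : ∀ᵐ x ∂ν, (t - x)⁻¹ - (s - x)⁻¹ = (s - t) * K x := by
    filter_upwards [haeC t ht, haeC s hs] with x hxt hxs
    have hpt : t - x ≠ 0 := by
      intro h; rw [h, abs_zero] at hxt; linarith [hC t ht]
    have hqs : s - x ≠ 0 := by
      intro h; rw [h, abs_zero] at hxs; linarith [hC s hs]
    show (t - x)⁻¹ - (s - x)⁻¹ = (s - t) * ((t - x) * (s - x))⁻¹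
    field_simp
    ring
  have hsub : ∫ x, (t - x)⁻¹ ∂ν - ∫ x, (s - x)⁻¹ ∂ν = (s - t) * ∫ x, K x ∂ν := by
    rw [← integral_sub (hinv t ht) (hinv s hs), integral_congr_ae hid, integral_const_mul]
  show HF ν s < HF ν t
  unfold HF
  nlinarith [hsub, hKlt, mul_pos (sub_pos.2 hst) (sub_pos.2 hKlt)]
end

section
/- Let t ∉ supp(ν) be such that for some δ > 0 one has ]t−δ, t[ ⊂ U_ν and [t, t+δ[ ⊂ ℝ \ U_ν. Then ∫ dν(x)/(t−x)² = 1 and ∫ dν(x)/(t−x)³ > 0. -/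
open MeasureTheory Filter Topology Set

/-- Integrability of negative powers away from the support. -/
lemma aux_integrable (ν : Measure ℝ) [IsProbabilityMeasure ν] {ε u : ℝ} (hε : 0 < ε)
    (hae : ∀ᵐ x ∂ν, ε ≤ |u - x|) (n : ℕ) :
    Integrable (fun x => ((u - x) ^ n)⁻¹) ν := by
  have hm : AEStronglyMeasurable (fun x => ((u - x) ^ n)⁻¹) ν :=
    (((measurable_const.sub measurable_id).pow_const n).inv).aestronglyMeasurable
  apply (integrable_const ((ε ^ n)⁻¹)).mono' hm
  filter_upwards [hae] with x hx
  rw [Real.norm_eq_abs, abs_inv, abs_pow]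
  exact inv_anti₀ (pow_pos hε n) (pow_le_pow_left₀ hε.le hx n)

/-- If `u ∉ U_ν` then `∫ dν(x)/(u−x)² ≤ 1`. -/
lemma aux_G_le_one (ν : Measure ℝ) [IsProbabilityMeasure ν] {ε u : ℝ} (hε : 0 < ε)
    (hae : ∀ᵐ x ∂ν, ε ≤ |u - x|) (hu : ¬ 0 < vF ν u) :
    ∫ x, ((u - x) ^ 2)⁻¹ ∂ν ≤ 1 := by
  by_contra h
  push_neg at h
  have cont : ContinuousAt (fun v : ℝ => ∫ x, ((u - x) ^ 2 + v ^ 2)⁻¹ ∂ν) 0 := by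
    apply continuousAt_of_dominated (bound := fun _ => (ε ^ 2)⁻¹)
    · exact Eventually.of_forall fun v =>
        ((((measurable_const.sub measurable_id).pow_const 2).add_const (v ^ 2)).inv).aestronglyMeasurable
    · refine Eventually.of_forall fun v => ?_
      filter_upwards [hae] with x hx
      have h2 : ε ^ 2 ≤ (u - x) ^ 2 + v ^ 2 := by
        nlinarith [sq_nonneg v, pow_le_pow_left₀ hε.le hx 2, sq_abs (u - x)]
      rw [Real.norm_eq_abs, abs_of_nonneg (by positivity)]
      exact inv_anti₀ (by positivity) h2
    · exact integrable_const _
    · filter_upwards [hae] with x hx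
      have hne : (u - x) ^ 2 + (0:ℝ) ^ 2 ≠ 0 := by
        have h0 : (0:ℝ) < (u - x) ^ 2 := by nlinarith [sq_abs (u - x)]
        simpa using h0.ne'
      exact (continuousAt_const.add ((continuous_id.pow 2).continuousAt)).inv₀ hne
  have h0 : (1:ℝ) < ∫ x, ((u - x) ^ 2 + (0:ℝ) ^ 2)⁻¹ ∂ν := by simpa using h
  have hev : (fun v : ℝ => ∫ x, ((u - x) ^ 2 + v ^ 2)⁻¹ ∂ν) ⁻¹' Ioi 1 ∈ 𝓝 (0:ℝ) :=
    cont (Ioi_mem_nhds h0)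
  obtain ⟨η, hη, hball⟩ := Metric.mem_nhds_iff.1 hev
  have hone : (1:ℝ) ∈ {v : ℝ | 0 ≤ v ∧ ∫ x, ((u - x) ^ 2 + v ^ 2)⁻¹ ∂ν ≤ 1} := by
    refine ⟨zero_le_one, ?_⟩
    have hle1 : ∀ x : ℝ, ((u - x) ^ 2 + (1:ℝ) ^ 2)⁻¹ ≤ 1 := by
      intro x
      rw [show (1:ℝ) = (1:ℝ)⁻¹ by norm_num]
      exact inv_anti₀ one_pos (by nlinarith [sq_nonneg (u - x)])
    have hint : Integrable (fun x => ((u - x) ^ 2 + (1:ℝ) ^ 2)⁻¹) ν := by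
      apply (integrable_const (1:ℝ)).mono'
        (((((measurable_const.sub measurable_id).pow_const 2).add_const _).inv).aestronglyMeasurable)
      refine Eventually.of_forall fun x => ?_
      show ‖((u - x) ^ 2 + (1:ℝ) ^ 2)⁻¹‖ ≤ 1
      rw [Real.norm_eq_abs, abs_of_nonneg (by positivity)]
      exact hle1 x
    calc ∫ x, ((u - x) ^ 2 + (1:ℝ) ^ 2)⁻¹ ∂ν ≤ ∫ _x, (1:ℝ) ∂ν :=
          integral_mono hint (integrable_const 1) hle1
      _ = 1 := by simp
  have hlb : η ≤ vF ν u := by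
    rw [vF]
    apply le_csInf ⟨1, hone⟩
    rintro v ⟨hv0, hvle⟩
    by_contra hlt
    push_neg at hlt
    have hmem : v ∈ Metric.ball (0:ℝ) η := by
      simp only [Metric.mem_ball, Real.dist_eq, sub_zero]
      rwa [abs_of_nonneg hv0]
    have := hball hmem
    simp only [mem_preimage, mem_Ioi] at this
    linarith
  exact hu (lt_of_lt_of_le hη hlb)

/-- Pointwise positivity of the key combination. -/
lemma aux_pos_pt {ε s a : ℝ} (hε : 0 < ε) (hs : 0 < s) (hs2 : s < ε / 4) (ha : ε ≤ |a|) :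
    0 < ((a + s) ^ 2)⁻¹ - (a ^ 2)⁻¹ + 2 * s * ((a ^ 3)⁻¹) := by
  rcases le_abs.mp ha with h | h
  · have ha' : 0 < a := lt_of_lt_of_le hε h
    have has : 0 < a + s := by linarith
    have key : ((a + s) ^ 2)⁻¹ - (a ^ 2)⁻¹ + 2 * s * ((a ^ 3)⁻¹)
        = s ^ 2 * (3 * a + 2 * s) / (a ^ 3 * (a + s) ^ 2) := by
      field_simp
      ring
    rw [key]
    exact div_pos (mul_pos (pow_pos hs 2) (by linarith)) (by positivity)
  · have ha' : a < 0 := by linarith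
    have has : a + s < 0 := by linarith
    have key : ((a + s) ^ 2)⁻¹ - (a ^ 2)⁻¹ + 2 * s * ((a ^ 3)⁻¹)
        = s ^ 2 * (3 * a + 2 * s) / (a ^ 3 * (a + s) ^ 2) := by
      have h1 : a ≠ 0 := ha'.ne
      have h2 : a + s ≠ 0 := has.ne
      field_simp
      ring
    rw [key]
    apply div_pos_of_neg_of_neg
    · exact mul_neg_of_pos_of_neg (pow_pos hs 2) (by linarith)
    · have h3 : a ^ 3 < 0 := Odd.pow_neg ⟨1, by ring⟩ ha'
      have h4 : 0 < (a + s) ^ 2 := pow_two_pos_of_ne_zero has.ne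
      exact mul_neg_of_neg_of_pos h3 h4

/-- if `t ∉ supp(ν)`, `]t−δ,t[ ⊆ U_ν` and `[t,t+δ[ ⊆ ℝ \ U_ν`, then
`∫ dν(x)/(t−x)² = 1` and `∫ dν(x)/(t−x)³ > 0`. -/
theorem stmt4 (ν : Measure ℝ) [IsProbabilityMeasure ν] (hcomp : IsCompact (MeasSupp ν))
    (t δ : ℝ) (ht : t ∉ MeasSupp ν) (hδ : 0 < δ)
    (h1 : Set.Ioo (t - δ) t ⊆ USet ν) (h2 : Set.Ico t (t + δ) ⊆ (USet ν)ᶜ) :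
    ∫ x, ((t - x) ^ 2)⁻¹ ∂ν = 1 ∧ 0 < ∫ x, ((t - x) ^ 3)⁻¹ ∂ν := by
  -- extract a ball of measure zero around t
  have ht' : ∃ U ∈ nhds t, ν U = 0 := by
    by_contra hc
    push_neg at hc
    exact ht fun U hU => hc U hU
  obtain ⟨U, hU, hU0⟩ := ht'
  obtain ⟨ε, hε, hball⟩ := Metric.mem_nhds_iff.1 hU
  have hae : ∀ᵐ x ∂ν, ε ≤ |t - x| := by
    rw [ae_iff]
    apply measure_mono_null _ (measure_mono_null hball hU0)
    intro x hx
    simp only [mem_setOf_eq, not_le] at hx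
    simpa [Metric.mem_ball, Real.dist_eq, abs_sub_comm] using hx
  -- G(t) ≤ 1
  have hUt : ¬ 0 < vF ν t := h2 ⟨le_refl t, by linarith⟩
  have hGt_le : ∫ x, ((t - x) ^ 2)⁻¹ ∂ν ≤ 1 := aux_G_le_one ν hε hae hUt
  -- continuity of G at t
  have hcont : ContinuousAt (fun u => ∫ x, ((u - x) ^ 2)⁻¹ ∂ν) t := by
    apply continuousAt_of_dominated (bound := fun _ => ((ε / 2) ^ 2)⁻¹)
    · exact Eventually.of_forall fun u =>
        (((measurable_const.sub measurable_id).pow_const 2).inv).aestronglyMeasurable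
    · filter_upwards [Metric.ball_mem_nhds t (half_pos hε)] with u hu
      filter_upwards [hae] with x hx
      have htu : |t - u| < ε / 2 := by
        simpa [Real.dist_eq, abs_sub_comm] using hu
      have hux : ε / 2 ≤ |u - x| := by
        have h3 : |t - x| ≤ |t - u| + |u - x| := abs_sub_le t u x
        linarith
      rw [Real.norm_eq_abs, abs_inv, abs_pow]
      exact inv_anti₀ (by positivity) (pow_le_pow_left₀ (by linarith) hux 2)
    · exact integrable_const _
    · filter_upwards [hae] with x hx
      have hne : (t - x) ^ 2 ≠ 0 := by
        have h0 : (0:ℝ) < (t - x) ^ 2 := by nlinarith [sq_abs (t - x)]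
        exact h0.ne'
      exact (((continuous_id.sub continuous_const).pow 2).continuousAt).inv₀ hne
  -- G(u) > 1 for u just left of t
  have hleft : ∀ u ∈ Ioo (max (t - δ) (t - ε / 2)) t, 1 ≤ ∫ x, ((u - x) ^ 2)⁻¹ ∂ν := by
    rintro u ⟨hu1, hu2⟩
    have hvu : 0 < vF ν u := h1 ⟨lt_of_le_of_lt (le_max_left _ _) hu1, hu2⟩
    by_contra hle
    push_neg at hle
    have h0mem : (0:ℝ) ∈ {v : ℝ | 0 ≤ v ∧ ∫ x, ((u - x) ^ 2 + v ^ 2)⁻¹ ∂ν ≤ 1} :=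
      ⟨le_refl 0, by simpa using hle.le⟩
    have hle0 : vF ν u ≤ 0 := by
      rw [vF]
      exact csInf_le ⟨0, fun v hv => hv.1⟩ h0mem
    linarith
  -- G(t) ≥ 1 by continuity from the left
  have hGt_ge : 1 ≤ ∫ x, ((t - x) ^ 2)⁻¹ ∂ν := by
    have htends : Tendsto (fun u => ∫ x, ((u - x) ^ 2)⁻¹ ∂ν) (𝓝[<] t)
        (𝓝 (∫ x, ((t - x) ^ 2)⁻¹ ∂ν)) := hcont.tendsto.mono_left nhdsWithin_le_nhds
    apply ge_of_tendsto htends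
    have hmem : Ioo (max (t - δ) (t - ε / 2)) t ∈ 𝓝[<] t :=
      Ioo_mem_nhdsLT_of_mem ⟨max_lt (by linarith) (by linarith), le_refl t⟩
    filter_upwards [hmem] with u hu
    exact hleft u hu
  have hGt1 : ∫ x, ((t - x) ^ 2)⁻¹ ∂ν = 1 := le_antisymm hGt_le hGt_ge
  refine ⟨hGt1, ?_⟩
  -- second part: positivity of the third moment
  set s : ℝ := min (δ / 2) (ε / 8) with hs_def
  have hs : 0 < s := lt_min (by linarith) (by linarith)
  have hs8 : s ≤ ε / 8 := min_le_right _ _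
  have hs4 : s < ε / 4 := by linarith
  have hsδ : s < δ := lt_of_le_of_lt (min_le_left _ _) (by linarith)
  set u : ℝ := t + s with hu_def
  have haeu : ∀ᵐ x ∂ν, ε / 2 ≤ |u - x| := by
    filter_upwards [hae] with x hx
    have h3 : |t - x| ≤ |t - u| + |u - x| := abs_sub_le t u x
    have htu : |t - u| = s := by
      rw [hu_def]
      rw [show t - (t + s) = -s by ring, abs_neg, abs_of_nonneg hs.le]
    linarith
  have hGu_le : ∫ x, ((u - x) ^ 2)⁻¹ ∂ν ≤ 1 := by
    apply aux_G_le_one ν (half_pos hε) haeu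
    exact h2 ⟨by linarith [hs], by simp only [hu_def]; linarith⟩
  have hI2t : Integrable (fun x => ((t - x) ^ 2)⁻¹) ν := aux_integrable ν hε hae 2
  have hI3t : Integrable (fun x => ((t - x) ^ 3)⁻¹) ν := aux_integrable ν hε hae 3
  have hI2u : Integrable (fun x => ((u - x) ^ 2)⁻¹) ν := aux_integrable ν (half_pos hε) haeu 2
  set φ : ℝ → ℝ := fun x => ((u - x) ^ 2)⁻¹ - ((t - x) ^ 2)⁻¹ + 2 * s * ((t - x) ^ 3)⁻¹ with hφ_def
  have hφint : Integrable φ ν := (hI2u.sub hI2t).add (hI3t.const_mul (2 * s))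
  have hφpos : ∀ᵐ x ∂ν, 0 < φ x := by
    filter_upwards [hae] with x hx
    have := aux_pos_pt hε hs hs4 hx
    simpa [hφ_def, show u - x = (t - x) + s by rw [hu_def]; ring] using this
  have hpos : 0 < ∫ x, φ x ∂ν := by
    rw [integral_pos_iff_support_of_nonneg_ae
      (by filter_upwards [hφpos] with x h; exact h.le) hφint]
    have hcompl : ν (Function.support φ)ᶜ = 0 := by
      apply measure_mono_null _ (ae_iff.mp hφpos)
      intro x hx
      simp only [mem_compl_iff, Function.mem_support, not_not] at hx
      simp [hx]
    by_contra hns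
    push_neg at hns
    have hns0 : ν (Function.support φ) = 0 := le_antisymm (by simpa using hns) (zero_le)
    have huniv := measure_union_le (μ := ν) (Function.support φ) (Function.support φ)ᶜ
    rw [union_compl_self, hns0, hcompl, measure_univ] at huniv
    simp at huniv
  have hsplit : ∫ x, φ x ∂ν = (∫ x, ((u - x) ^ 2)⁻¹ ∂ν) - (∫ x, ((t - x) ^ 2)⁻¹ ∂ν)
      + 2 * s * (∫ x, ((t - x) ^ 3)⁻¹ ∂ν) := by
    have e1 : ∫ x, φ x ∂ν = (∫ x, (((u - x) ^ 2)⁻¹ - ((t - x) ^ 2)⁻¹) ∂ν)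
        + ∫ x, 2 * s * ((t - x) ^ 3)⁻¹ ∂ν := integral_add (hI2u.sub hI2t) (hI3t.const_mul (2 * s))
    have e2 : ∫ x, (((u - x) ^ 2)⁻¹ - ((t - x) ^ 2)⁻¹) ∂ν
        = (∫ x, ((u - x) ^ 2)⁻¹ ∂ν) - ∫ x, ((t - x) ^ 2)⁻¹ ∂ν := integral_sub hI2u hI2t
    have e3 : ∫ x, 2 * s * ((t - x) ^ 3)⁻¹ ∂ν = 2 * s * ∫ x, ((t - x) ^ 3)⁻¹ ∂ν :=
      integral_const_mul _ _
    rw [e1, e2, e3]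
  rw [hsplit, hGt1] at hpos
  nlinarith
end

section
/- Let t' ∉ supp(ν) be such that for some δ > 0 one has ]t'−δ, t'] ⊂ ℝ \ U_ν and ]t', t'+δ[ ⊂ U_ν. Then ∫ dν(x)/(t'−x)² = 1 and ∫ dν(x)/(t'−x)³ < 0. -/
open MeasureTheory Filter Topology Set

lemma suppNull (μ : Measure ℝ) : μ (MeasSupp μ)ᶜ = 0 := by
  apply measure_null_of_locally_null
  intro x hx
  simp only [mem_compl_iff, MeasSupp, mem_setOf_eq, not_forall] at hx
  obtain ⟨U, hU, hU0⟩ := hx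
  simp only [not_not] at hU0
  exact ⟨U, nhdsWithin_le_nhds hU, hU0⟩

lemma aeSupp (μ : Measure ℝ) : ∀ᵐ x ∂μ, x ∈ MeasSupp μ := by
  rw [ae_iff]
  exact suppNull μ

lemma integ_of_bdd {ν : Measure ℝ} [IsProbabilityMeasure ν] {g : ℝ → ℝ}
    (hg : AEMeasurable g ν) {C : ℝ} (hb : ∀ᵐ x ∂ν, |g x| ≤ C) : Integrable g ν := by
  refine Integrable.mono' (integrable_const C) hg.aestronglyMeasurable ?_
  filter_upwards [hb] with x hx using by simpa [Real.norm_eq_abs] using hx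

lemma supp_bounds (ν : Measure ℝ) [IsProbabilityMeasure ν] (hcomp : IsCompact (MeasSupp ν))
    (t' : ℝ) (ht : t' ∉ MeasSupp ν) :
    ∃ e > 0, ∃ K, e ≤ K ∧ (∀ x ∈ MeasSupp ν, e ≤ |t' - x|) ∧
      (∀ x ∈ MeasSupp ν, |t' - x| ≤ K) := by
  have hne : (MeasSupp ν).Nonempty := by
    by_contra hem
    rw [not_nonempty_iff_eq_empty] at hem
    have := suppNull ν
    rw [hem, compl_empty] at this
    simpa [this] using (measure_univ (μ := ν))
  obtain ⟨x₀, hx₀, hmin⟩ := hcomp.exists_isMinOn hne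
    (Continuous.continuousOn (by continuity : Continuous fun x => |t' - x|))
  obtain ⟨R, hR⟩ := isBounded_iff_forall_norm_le.1 hcomp.isBounded
  have he0 : 0 < |t' - x₀| := by
    rw [abs_pos, sub_ne_zero]
    rintro rfl
    exact ht hx₀
  refine ⟨|t' - x₀|, he0, |t' - x₀| + |t'| + |R| + 1,
    by linarith [abs_nonneg (t' : ℝ), abs_nonneg R], fun x hx => hmin hx, fun x hx => ?_⟩
  have h1 := hR x hx
  have h2 : |t' - x| ≤ |t'| + |x| := abs_sub _ _
  have h3 : |x| ≤ |R| := h1.trans (le_abs_self R)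
  linarith [abs_nonneg (t' - x₀)]

lemma meas_a (u v : ℝ) : Measurable fun x : ℝ => ((u - x)^2 + v^2)⁻¹ :=
  (((measurable_const.sub measurable_id).pow_const 2).add measurable_const).inv

lemma meas_b (u : ℝ) (n : ℕ) : Measurable fun x : ℝ => ((u - x)^n)⁻¹ :=
  ((measurable_const.sub measurable_id).pow_const n).inv

lemma meas_c (t' h : ℝ) :
    Measurable fun x : ℝ => (3*(t' - x) - 2*h)/((t' - x)^3*((t' - x) - h)^2) :=
  (((measurable_const.sub measurable_id).const_mul 3).sub measurable_const).div
    (((measurable_const.sub measurable_id).pow_const 3).mul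
      (((measurable_const.sub measurable_id).sub measurable_const).pow_const 2))

lemma pt1 {b v e : ℝ} (he : 0 < e) (hb : e ≤ |b|) :
    (b^2)⁻¹ - (b^2 + v^2)⁻¹ ≤ v^2 / (e^2*e^2) := by
  have hb2 : e^2 ≤ b^2 := by nlinarith [abs_nonneg b, sq_abs b]
  have hb0 : (0:ℝ) < b^2 := lt_of_lt_of_le (by positivity) hb2
  have key : (b^2)⁻¹ - (b^2 + v^2)⁻¹ = v^2 / (b^2*(b^2+v^2)) := by
    rw [inv_sub_inv hb0.ne' (by positivity)]; ring
  rw [key]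
  apply div_le_div_of_nonneg_left (by positivity) (by positivity)
  nlinarith [sq_nonneg v]

lemma pt_inv2 {b v e : ℝ} (he : 0 < e) (hb : e ≤ |b|) : |(b^2 + v^2)⁻¹| ≤ (e^2)⁻¹ := by
  have hb2 : e^2 ≤ b^2 := by nlinarith [abs_nonneg b, sq_abs b]
  rw [abs_of_nonneg (by positivity)]
  exact inv_anti₀ (by positivity) (by nlinarith [sq_nonneg v])

lemma pt_inv2' {b e : ℝ} (he : 0 < e) (hb : e ≤ |b|) : |(b^2)⁻¹| ≤ (e^2)⁻¹ := by
  have := pt_inv2 (v := 0) he hb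
  simpa using this

lemma pt_inv3 {b e : ℝ} (he : 0 < e) (hb : e ≤ |b|) : |(b^3)⁻¹| ≤ (e^3)⁻¹ := by
  rw [abs_inv, abs_pow]
  exact inv_anti₀ (by positivity) (pow_le_pow_left₀ he.le hb 3)

lemma pt_lip {a b e K : ℝ} (he : 0 < e) (ha : e ≤ |a|) (hb : e ≤ |b|)
    (haK : |a| ≤ K) (hbK : |b| ≤ K) :
    |(b^2)⁻¹ - (a^2)⁻¹| ≤ |a - b| * (2*K/(e^2*e^2)) := by
  have ha2 : e^2 ≤ a^2 := by nlinarith [abs_nonneg a, sq_abs a]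
  have hb2 : e^2 ≤ b^2 := by nlinarith [abs_nonneg b, sq_abs b]
  have ha0 : (0:ℝ) < a^2 := lt_of_lt_of_le (by positivity) ha2
  have hb0 : (0:ℝ) < b^2 := lt_of_lt_of_le (by positivity) hb2
  have key : (b^2)⁻¹ - (a^2)⁻¹ = ((a-b)*(a+b)) / (a^2*b^2) := by
    rw [inv_sub_inv hb0.ne' ha0.ne']; ring
  rw [key, abs_div]
  have h1 : |(a-b)*(a+b)| ≤ |a - b| * (2*K) := by
    rw [abs_mul]
    refine mul_le_mul_of_nonneg_left ?_ (abs_nonneg _)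
    calc |a + b| ≤ |a| + |b| := abs_add_le _ _
    _ ≤ 2*K := by linarith
  have h2 : e^2*e^2 ≤ |a^2*b^2| := by
    rw [abs_of_pos (by positivity)]
    nlinarith [sq_nonneg e]
  calc |(a-b)*(a+b)| / |a^2*b^2| ≤ (|a - b| * (2*K)) / (e^2*e^2) :=
        div_le_div₀ (mul_nonneg (abs_nonneg _) (by linarith [ha.trans haK, he.le])) h1
          (by positivity) h2
  _ = |a - b| * (2*K/(e^2*e^2)) := by ring

lemma pt_taylor {a h : ℝ} (ha : a ≠ 0) (hah : a - h ≠ 0) :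
    ((a-h)^2)⁻¹ = (a^2)⁻¹ + 2*h*(a^3)⁻¹ + h^2 * ((3*a-2*h) / (a^3*(a-h)^2)) := by
  field_simp
  ring

lemma pt_pos {a h e : ℝ} (he : 0 < e) (ha : e ≤ |a|) (hh : 0 < h) (hhe : h ≤ e/2) :
    0 < (3*a - 2*h)/(a^3 * (a-h)^2) := by
  rcases abs_cases a with ⟨h1, _⟩ | ⟨h1, hneg⟩
  · have hae : e ≤ a := by linarith
    have hah : 0 < a - h := by linarith
    exact div_pos (by linarith) (mul_pos (pow_pos (by linarith) 3) (pow_pos hah 2))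
  · have hae : a ≤ -e := by linarith
    have hah : a - h < 0 := by linarith
    apply div_pos_of_neg_of_neg (by linarith)
    have h3 : a^3 < 0 := Odd.pow_neg ⟨1, by norm_num⟩ hneg
    have h4 : 0 < (a-h)^2 := pow_pos (by linarith : 0 < -(a-h)) 2 |>.trans_eq (by ring)
    nlinarith

lemma pt_bd {a h e K : ℝ} (he : 0 < e) (ha : e ≤ |a|) (haK : |a| ≤ K)
    (hh : 0 ≤ h) (hhe : h ≤ e/2) :
    |(3*a-2*h) / (a^3*(a-h)^2)| ≤ (3*K+e) / (e^3*(e/2)^2) := by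
  have hK : e ≤ K := ha.trans haK
  have hnum : |3*a-2*h| ≤ 3*K + e := by
    calc |3*a-2*h| ≤ |3*a| + |2*h| := abs_sub _ _
    _ = 3 * |a| + 2*h := by rw [abs_mul, abs_mul]; simp [abs_of_nonneg hh]
    _ ≤ 3*K + e := by linarith
  have hden : e^3*(e/2)^2 ≤ |a^3*(a-h)^2| := by
    rw [abs_mul]
    have h1 : e^3 ≤ |a^3| := by
      rw [abs_pow]; exact pow_le_pow_left₀ he.le ha 3
    have h2 : (e/2)^2 ≤ |(a-h)^2| := by
      rw [abs_pow, sq_abs]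
      have h5 : e/2 ≤ |a - h| := by
        rcases abs_cases a with ⟨c1, _⟩ | ⟨c1, _⟩
        · rw [abs_of_nonneg (by linarith)]; linarith
        · rw [abs_of_nonpos (by linarith)]; linarith
      nlinarith [abs_nonneg (a-h), sq_abs (a-h)]
    calc e^3*(e/2)^2 ≤ |a^3| * (e/2)^2 := by nlinarith [abs_nonneg (a^3), sq_nonneg (e/2)]
    _ ≤ |a^3| * |(a-h)^2| := by nlinarith [abs_nonneg (a^3)]
  rw [abs_div]
  exact div_le_div₀ (by linarith) hnum (by positivity) hden

/-- if `t' ∉ supp(ν)`, `]t'−δ,t'] ⊆ ℝ \ U_ν` and `]t',t'+δ[ ⊆ U_ν`, then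
`∫ dν(x)/(t'−x)² = 1` and `∫ dν(x)/(t'−x)³ < 0`. -/
theorem stmt5 (ν : Measure ℝ) [IsProbabilityMeasure ν] (hcomp : IsCompact (MeasSupp ν))
    (t' δ : ℝ) (ht : t' ∉ MeasSupp ν) (hδ : 0 < δ)
    (h1 : Set.Ioc (t' - δ) t' ⊆ (USet ν)ᶜ) (h2 : Set.Ioo t' (t' + δ) ⊆ USet ν) :
    ∫ x, ((t' - x) ^ 2)⁻¹ ∂ν = 1 ∧ ∫ x, ((t' - x) ^ 3)⁻¹ ∂ν < 0 := by
  obtain ⟨e, he, K, heK, hlo, hhi⟩ := supp_bounds ν hcomp t' ht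
  have hae := aeSupp ν
  -- basic bounds for u near t'
  have hlo' : ∀ u : ℝ, |u - t'| ≤ e/2 → ∀ x ∈ MeasSupp ν, e/2 ≤ |u - x| := by
    intro u hu x hx
    have h3 : |t' - x| ≤ |t' - u| + |u - x| := abs_sub_le _ _ _
    have h4 : |t' - u| = |u - t'| := abs_sub_comm _ _
    linarith [hlo x hx]
  have hhi' : ∀ u : ℝ, |u - t'| ≤ e/2 → ∀ x ∈ MeasSupp ν, |u - x| ≤ K + e := by
    intro u hu x hx
    have h3 : |u - x| ≤ |u - t'| + |t' - x| := abs_sub_le _ _ _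
    linarith [hhi x hx]
  -- integrability
  have hIntv : ∀ u v : ℝ, |u - t'| ≤ e/2 →
      Integrable (fun x => ((u - x)^2 + v^2)⁻¹) ν := by
    intro u v hu
    refine integ_of_bdd (meas_a u v).aemeasurable (C := ((e/2)^2)⁻¹) ?_
    filter_upwards [hae] with x hx
    exact pt_inv2 (by positivity) (hlo' u hu x hx)
  have hInt2 : ∀ u : ℝ, |u - t'| ≤ e/2 → Integrable (fun x => ((u - x)^2)⁻¹) ν := by
    intro u hu
    refine integ_of_bdd (meas_b u 2).aemeasurable (C := ((e/2)^2)⁻¹) ?_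
    filter_upwards [hae] with x hx
    exact pt_inv2' (by positivity) (hlo' u hu x hx)
  have ht'0 : |t' - t'| ≤ e/2 := by simp; positivity
  have hInt3 : Integrable (fun x => ((t' - x)^3)⁻¹) ν := by
    refine integ_of_bdd (meas_b t' 3).aemeasurable (C := (e^3)⁻¹) ?_
    filter_upwards [hae] with x hx
    exact pt_inv3 he (hlo x hx)
  -- characterization of USet near t'
  have hUin : ∀ u : ℝ, |u - t'| ≤ e/2 → u ∈ USet ν → 1 < ∫ x, ((u - x)^2)⁻¹ ∂ν := by
    intro u hu huU
    by_contra hle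
    push_neg at hle
    have h0mem : (0:ℝ) ∈ {v : ℝ | 0 ≤ v ∧ ∫ x, ((u - x) ^ 2 + v ^ 2)⁻¹ ∂ν ≤ 1} :=
      ⟨le_refl 0, by simpa using hle⟩
    have hv0 : vF ν u ≤ 0 := csInf_le ⟨0, fun v hv => hv.1⟩ h0mem
    exact absurd huU (by simp [USet, not_lt.2 hv0])
  have hUc : ∀ u : ℝ, |u - t'| ≤ e/2 → u ∉ USet ν → ∫ x, ((u - x)^2)⁻¹ ∂ν ≤ 1 := by
    intro u hu huU
    have hvle : vF ν u ≤ 0 := by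
      by_contra hc
      exact huU (by simp only [USet, mem_setOf_eq]; linarith [not_le.1 hc])
    have hSne : {v : ℝ | 0 ≤ v ∧ ∫ x, ((u - x) ^ 2 + v ^ 2)⁻¹ ∂ν ≤ 1}.Nonempty := by
      refine ⟨1, by norm_num, ?_⟩
      calc ∫ x, ((u - x) ^ 2 + 1 ^ 2)⁻¹ ∂ν ≤ ∫ _x, (1:ℝ) ∂ν := by
            refine integral_mono (hIntv u 1 hu) (integrable_const 1) ?_
            intro x
            have : (1:ℝ) ≤ (u - x)^2 + 1^2 := by nlinarith [sq_nonneg (u - x)]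
            simpa using inv_le_one_of_one_le₀ this
      _ = 1 := by simp
    set E : ℝ := (e/2)^2*(e/2)^2 with hE
    have hEpos : 0 < E := by positivity
    refine le_of_forall_pos_le_add ?_
    intro η hη
    have hlt : vF ν u < min 1 (η * E) := lt_of_le_of_lt hvle (by positivity)
    obtain ⟨v, hvS, hvlt⟩ := exists_lt_of_csInf_lt hSne hlt
    obtain ⟨hv0, hvint⟩ := hvS
    have hsub : ∫ x, (((u - x)^2)⁻¹ - ((u - x)^2 + v^2)⁻¹) ∂ν ≤ v^2 / E := by
      calc ∫ x, (((u - x)^2)⁻¹ - ((u - x)^2 + v^2)⁻¹) ∂ν ≤ ∫ _x, v^2 / E ∂ν := by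
            refine integral_mono_ae ((hInt2 u hu).sub (hIntv u v hu)) (integrable_const _) ?_
            filter_upwards [hae] with x hx
            exact pt1 (by positivity) (hlo' u hu x hx)
      _ = v^2 / E := by simp
    rw [integral_sub (hInt2 u hu) (hIntv u v hu)] at hsub
    have hv1 : v ≤ 1 := le_of_lt (lt_of_lt_of_le hvlt (min_le_left _ _))
    have hvE : v < η * E := lt_of_lt_of_le hvlt (min_le_right _ _)
    have hfin : v^2 / E ≤ η := by
      rw [div_le_iff₀ hEpos]
      nlinarith
    linarith
  -- part 1
  have key1a : ∫ x, ((t' - x)^2)⁻¹ ∂ν ≤ 1 := hUc t' ht'0 (h1 ⟨by linarith, le_refl t'⟩)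
  set L : ℝ := 2*(K+e)/((e/2)^2*(e/2)^2) with hL
  have hLpos : 0 < L := by
    have : 0 < K := lt_of_lt_of_le he heK
    positivity
  have hlip : ∀ u : ℝ, |u - t'| ≤ e/2 →
      |(∫ x, ((u - x)^2)⁻¹ ∂ν) - ∫ x, ((t' - x)^2)⁻¹ ∂ν| ≤ |u - t'| * L := by
    intro u hu
    rw [← integral_sub (hInt2 u hu) (hInt2 t' ht'0)]
    calc |∫ x, (((u - x)^2)⁻¹ - ((t' - x)^2)⁻¹) ∂ν|
        ≤ ∫ x, |((u - x)^2)⁻¹ - ((t' - x)^2)⁻¹| ∂ν := by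
          simpa [Real.norm_eq_abs] using
            norm_integral_le_integral_norm (μ := ν)
              (fun x => ((u - x)^2)⁻¹ - ((t' - x)^2)⁻¹)
    _ ≤ ∫ _x, |u - t'| * L ∂ν := by
          refine integral_mono_ae (((hInt2 u hu).sub (hInt2 t' ht'0)).abs)
            (integrable_const _) ?_
          filter_upwards [hae] with x hx
          have hptl := pt_lip (e := e/2) (K := K + e) (by positivity)
            (hlo x hx |>.trans' (by linarith) : e/2 ≤ |t' - x|)
            (hlo' u hu x hx) ((hhi x hx).trans (by linarith)) (hhi' u hu x hx)
          have heq2 : |(t' - x) - (u - x)| = |u - t'| := by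
            rw [abs_sub_comm]; ring_nf
          rw [heq2] at hptl
          exact hptl
    _ = |u - t'| * L := by simp
  have key1b : 1 ≤ ∫ x, ((t' - x)^2)⁻¹ ∂ν := by
    by_contra hc
    push_neg at hc
    set F0 := ∫ x, ((t' - x)^2)⁻¹ ∂ν with hF0
    set h : ℝ := min (e/2) (min (δ/2) ((1 - F0)/(L+1))) with hh
    have hhpos : 0 < h := by
      refine lt_min (by positivity) (lt_min (by positivity) (div_pos (by linarith) (by linarith)))
    have habs : |t' + h - t'| ≤ e/2 := by
      rw [show t' + h - t' = h by ring, abs_of_pos hhpos]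
      exact min_le_left _ _
    have hmem : t' + h ∈ Ioo t' (t' + δ) := by
      constructor
      · linarith
      · have : h ≤ δ/2 := (min_le_right _ _).trans (min_le_left _ _)
        linarith
    have hgt := hUin (t' + h) habs (h2 hmem)
    have hlip' := hlip (t' + h) habs
    rw [show t' + h - t' = h by ring, abs_of_pos hhpos] at hlip'
    have hFle : ∫ x, ((t' + h - x)^2)⁻¹ ∂ν ≤ F0 + h * L := by
      have := abs_sub_le_iff.1 hlip'
      linarith [this.1]
    have hh3 : h ≤ (1 - F0)/(L+1) := (min_le_right _ _).trans (min_le_right _ _)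
    have hh4 : h * (L+1) ≤ 1 - F0 := by
      have := (le_div_iff₀ (by linarith : (0:ℝ) < L+1)).1 hh3
      linarith
    nlinarith
  have part1 : ∫ x, ((t' - x)^2)⁻¹ ∂ν = 1 := le_antisymm key1a key1b
  refine ⟨by exact_mod_cast part1, ?_⟩
  -- part 2
  by_contra hc
  push_neg at hc
  set I := ∫ x, ((t' - x)^3)⁻¹ ∂ν with hI
  set h : ℝ := min (e/2) (δ/2) with hh
  have hhpos : 0 < h := lt_min (by positivity) (by positivity)
  have hhe2 : h ≤ e/2 := min_le_left _ _
  have hhδ : h < δ := lt_of_le_of_lt (min_le_right _ _) (by linarith)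
  set u : ℝ := t' - h with hu
  have huabs : |u - t'| ≤ e/2 := by
    rw [show u - t' = -h by rw [hu]; ring, abs_neg, abs_of_pos hhpos]
    exact hhe2
  have hmemIoc : u ∈ Ioc (t' - δ) t' := ⟨by rw [hu]; linarith, by rw [hu]; linarith⟩
  have hFu : ∫ x, ((u - x)^2)⁻¹ ∂ν ≤ 1 := hUc u huabs (h1 hmemIoc)
  set R : ℝ → ℝ := fun x => (3*(t' - x) - 2*h)/((t' - x)^3*((t' - x) - h)^2) with hR
  have hIntR : Integrable R ν := by
    refine integ_of_bdd (meas_c t' h).aemeasurable (C := (3*K+e) / (e^3*(e/2)^2)) ?_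
    filter_upwards [hae] with x hx
    exact pt_bd he (hlo x hx) (hhi x hx) hhpos.le hhe2
  have hRpos : ∀ᵐ x ∂ν, 0 < R x := by
    filter_upwards [hae] with x hx
    exact pt_pos he (hlo x hx) hhpos hhe2
  have hJpos : 0 < ∫ x, R x ∂ν := by
    rw [integral_pos_iff_support_of_nonneg_ae
      (by filter_upwards [hRpos] with x hx using hx.le) hIntR]
    have hsupp : ∀ᵐ x ∂ν, x ∈ Function.support R := by
      filter_upwards [hRpos] with x hx using hx.ne'
    have h0 : ν (Function.support R)ᶜ = 0 := by
      rw [ae_iff] at hsupp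
      exact hsupp
    by_contra h00
    push_neg at h00
    rw [le_zero_iff] at h00
    have huniv : ν univ ≤ ν (Function.support R) + ν (Function.support R)ᶜ := by
      rw [← union_compl_self (Function.support R)]
      exact measure_union_le _ _
    rw [measure_univ, h00, h0] at huniv
    simp at huniv
  have heq : ∫ x, ((u - x)^2)⁻¹ ∂ν
      = (∫ x, ((t' - x)^2)⁻¹ ∂ν) + 2*h*I + h^2 * ∫ x, R x ∂ν := by
    have hcongr : ∫ x, ((u - x)^2)⁻¹ ∂ν
        = ∫ x, (((t' - x)^2)⁻¹ + 2*h*((t' - x)^3)⁻¹ + h^2 * R x) ∂ν := by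
      refine integral_congr_ae ?_
      filter_upwards [hae] with x hx
      have ha0 : t' - x ≠ 0 := by
        have hax := hlo x hx
        intro hz
        rw [hz, abs_zero] at hax
        linarith
      have hah0 : (t' - x) - h ≠ 0 := by
        have := hlo' u huabs x hx
        rw [show u - x = (t' - x) - h by rw [hu]; ring] at this
        intro hz
        rw [hz] at this
        simp at this
        linarith
      rw [show u - x = (t' - x) - h by rw [hu]; ring]
      exact pt_taylor ha0 hah0
    have e1 : ∫ x, ((((t' - x)^2)⁻¹ + 2*h*((t' - x)^3)⁻¹) + h^2 * R x) ∂ν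
        = (∫ x, (((t' - x)^2)⁻¹ + 2*h*((t' - x)^3)⁻¹) ∂ν) + ∫ x, h^2 * R x ∂ν :=
      integral_add ((hInt2 t' ht'0).add (hInt3.const_mul (2*h))) (hIntR.const_mul (h^2))
    have e2 : ∫ x, (((t' - x)^2)⁻¹ + 2*h*((t' - x)^3)⁻¹) ∂ν
        = (∫ x, ((t' - x)^2)⁻¹ ∂ν) + ∫ x, 2*h*((t' - x)^3)⁻¹ ∂ν :=
      integral_add (hInt2 t' ht'0) (hInt3.const_mul (2*h))
    have e3 : ∫ x, 2*h*((t' - x)^3)⁻¹ ∂ν = 2*h*I := integral_const_mul _ _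
    have e4 : ∫ x, h^2 * R x ∂ν = h^2 * ∫ x, R x ∂ν := integral_const_mul _ _
    rw [hcongr, e1, e2, e3, e4]
  rw [heq, part1] at hFu
  nlinarith [mul_nonneg (mul_nonneg (by norm_num : (0:ℝ) ≤ 2) hhpos.le) hc,
    mul_pos (pow_pos hhpos 2) hJpos]
end

section
/- For every t ∈ U_ν, v_N(t) converges to v_ν(t) as N → ∞. -/
open MeasureTheory Filter Topology Set
open scoped ENNReal

/-- `ν̂_N = (1/(N−r)) Σ_{j=1}^{N−r} δ_{β_j(N)}`. -/
noncomputable def hatNu (r : ℕ) (β : ℕ → ℕ → ℝ) (N : ℕ) : Measure ℝ :=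
  ((N - r : ℕ) : ℝ≥0∞)⁻¹ • ∑ i ∈ Finset.range (N - r), Measure.dirac (β N i)

lemma invAux_le {a b : ℝ} (ha : 0 < a) (h : a ≤ b) : b⁻¹ ≤ a⁻¹ := by gcongr

lemma invAux_lt {a b : ℝ} (ha : 0 < a) (h : a < b) : b⁻¹ < a⁻¹ := by gcongr

lemma stmt7_integrable_dirac {f : ℝ → ℝ} (hf : Measurable f) (a : ℝ) :
    Integrable f (Measure.dirac a) := by
  refine ⟨hf.aestronglyMeasurable, ?_⟩
  rw [HasFiniteIntegral, lintegral_dirac]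
  exact ENNReal.coe_lt_top

noncomputable def stmtFb (t v : ℝ) (hv : v ≠ 0) : BoundedContinuousFunction ℝ ℝ :=
  .ofNormedAddCommGroup (fun x => ((t - x) ^ 2 + v ^ 2)⁻¹)
    (by
      have h : ∀ x : ℝ, (t - x) ^ 2 + v ^ 2 ≠ 0 := fun x => by positivity
      exact (((continuous_const.sub continuous_id).pow 2).add continuous_const).inv₀ h)
    ((v ^ 2)⁻¹)
    (by
      intro x
      have h0 : (0:ℝ) ≤ ((t - x) ^ 2 + v ^ 2)⁻¹ := by positivity
      rw [Real.norm_eq_abs, abs_of_nonneg h0]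
      exact invAux_le (by positivity) (le_add_of_nonneg_left (sq_nonneg _)))

lemma stmtFb_coe (t v : ℝ) (hv : v ≠ 0) :
    ⇑(stmtFb t v hv) = fun x => ((t - x) ^ 2 + v ^ 2)⁻¹ := rfl

noncomputable def stmtG (t : ℝ) (n : ℕ) : BoundedContinuousFunction ℝ ℝ :=
  .ofNormedAddCommGroup
    (fun x => min (((t - x) ^ 2 + (((n:ℝ)+1)⁻¹) ^ 2)⁻¹) (((n:ℝ)+1) ^ 4 * (t - x) ^ 2))
    (by
      have h : ∀ x : ℝ, (t - x) ^ 2 + (((n:ℝ)+1)⁻¹) ^ 2 ≠ 0 := fun x => by positivity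
      exact Continuous.min
        ((((continuous_const.sub continuous_id).pow 2).add continuous_const).inv₀ h)
        (continuous_const.mul ((continuous_const.sub continuous_id).pow 2)))
    (((n:ℝ)+1) ^ 2)
    (by
      intro x
      have h0 : (0:ℝ) ≤ min (((t - x) ^ 2 + (((n:ℝ)+1)⁻¹) ^ 2)⁻¹) (((n:ℝ)+1) ^ 4 * (t - x) ^ 2) := by
        positivity
      rw [Real.norm_eq_abs, abs_of_nonneg h0]
      refine (min_le_left _ _).trans ?_
      have : (((n:ℝ)+1)⁻¹) ^ 2 ≤ (t - x) ^ 2 + (((n:ℝ)+1)⁻¹) ^ 2 :=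
        le_add_of_nonneg_left (sq_nonneg _)
      calc ((t - x) ^ 2 + (((n:ℝ)+1)⁻¹) ^ 2)⁻¹ ≤ ((((n:ℝ)+1)⁻¹) ^ 2)⁻¹ :=
            invAux_le (by positivity) this
        _ = ((n:ℝ)+1) ^ 2 := by rw [← inv_pow, inv_inv])

lemma stmtG_coe (t : ℝ) (n : ℕ) :
    ⇑(stmtG t n) = fun x =>
      min (((t - x) ^ 2 + (((n:ℝ)+1)⁻¹) ^ 2)⁻¹) (((n:ℝ)+1) ^ 4 * (t - x) ^ 2) := rfl

-- g n ≤ junk integrand at v = 0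
lemma stmtG_le (t : ℝ) (n : ℕ) (x : ℝ) :
    stmtG t n x ≤ ((t - x) ^ 2 + (0:ℝ) ^ 2)⁻¹ := by
  rw [stmtG_coe]
  rcases eq_or_ne x t with rfl | hx
  · simp
  · have hpos : 0 < (t - x) ^ 2 := by
      have : t - x ≠ 0 := sub_ne_zero.2 (Ne.symm hx)
      positivity
    refine (min_le_left _ _).trans ?_
    refine invAux_le (by simpa using hpos) ?_
    simp [sq_nonneg]

-- monotone in n
lemma stmtG_mono (t x : ℝ) : Monotone fun n : ℕ => stmtG t n x := by
  intro m n hmn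
  simp only [stmtG_coe]
  have h1 : ((m:ℝ)+1) ≤ ((n:ℝ)+1) := by exact_mod_cast Nat.succ_le_succ hmn
  have hm : (0:ℝ) < (m:ℝ)+1 := by positivity
  refine min_le_min ?_ ?_
  · refine invAux_le (by positivity) ?_
    have : (((n:ℝ)+1)⁻¹) ^ 2 ≤ (((m:ℝ)+1)⁻¹) ^ 2 := by
      have := invAux_le hm h1
      have h2 : (0:ℝ) ≤ ((n:ℝ)+1)⁻¹ := by positivity
      exact pow_le_pow_left₀ h2 this 2
    linarith
  · have : ((m:ℝ)+1) ^ 4 ≤ ((n:ℝ)+1) ^ 4 := pow_le_pow_left₀ (by positivity) h1 4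
    exact mul_le_mul_of_nonneg_right this (sq_nonneg _)

-- pointwise limit
lemma stmtG_tendsto (t x : ℝ) :
    Tendsto (fun n : ℕ => stmtG t n x) atTop (𝓝 (((t - x) ^ 2 + (0:ℝ) ^ 2)⁻¹)) := by
  simp only [stmtG_coe]
  rcases eq_or_ne (t - x) 0 with ht0 | ht0
  · have hconst : ∀ n : ℕ,
        min (((t - x) ^ 2 + (((n:ℝ)+1)⁻¹) ^ 2)⁻¹) (((n:ℝ)+1) ^ 4 * (t - x) ^ 2) = 0 := by
      intro n
      rw [ht0]
      have : ((n:ℝ)+1) ^ 4 * (0:ℝ) ^ 2 = 0 := by ring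
      rw [this]
      exact min_eq_right (by positivity)
    have hval : ((t - x) ^ 2 + (0:ℝ) ^ 2)⁻¹ = 0 := by
      rw [ht0]; norm_num
    rw [hval]
    simpa only [hconst] using (tendsto_const_nhds : Tendsto (fun _ : ℕ => (0:ℝ)) atTop (𝓝 0))
  · have hpos : 0 < (t - x) ^ 2 := by positivity
    have hA : Tendsto (fun n : ℕ => ((t - x) ^ 2 + (((n:ℝ)+1)⁻¹) ^ 2)⁻¹) atTop
        (𝓝 (((t - x) ^ 2 + (0:ℝ) ^ 2)⁻¹)) := by
      have h0 : Tendsto (fun n : ℕ => ((n:ℝ)+1)⁻¹) atTop (𝓝 0) := by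
        simpa using (tendsto_one_div_add_atTop_nhds_zero_nat : Tendsto (fun n : ℕ => 1 / ((n:ℝ) + 1)) atTop (𝓝 0))
      have h1 : Tendsto (fun n : ℕ => (t - x) ^ 2 + (((n:ℝ)+1)⁻¹) ^ 2) atTop
          (𝓝 ((t - x) ^ 2 + (0:ℝ) ^ 2)) :=
        tendsto_const_nhds.add (h0.pow 2)
      exact h1.inv₀ (by positivity)
    have hB : Tendsto (fun n : ℕ => ((n:ℝ)+1) ^ 4 * (t - x) ^ 2) atTop atTop := by
      refine Tendsto.atTop_mul_const hpos ?_
      exact (tendsto_pow_atTop (by norm_num : (4:ℕ) ≠ 0)).comp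
        (tendsto_atTop_add_const_right atTop 1 tendsto_natCast_atTop_atTop)
    have hev : ∀ᶠ n : ℕ in atTop,
        ((t - x) ^ 2 + (((n:ℝ)+1)⁻¹) ^ 2)⁻¹
          = min (((t - x) ^ 2 + (((n:ℝ)+1)⁻¹) ^ 2)⁻¹) (((n:ℝ)+1) ^ 4 * (t - x) ^ 2) := by
      have hBd : ∀ᶠ n : ℕ in atTop, ((t - x) ^ 2)⁻¹ ≤ ((n:ℝ)+1) ^ 4 * (t - x) ^ 2 :=
        hB.eventually_ge_atTop _
      filter_upwards [hBd] with n hn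
      refine (min_eq_left (le_trans ?_ hn)).symm
      exact invAux_le hpos (le_add_of_nonneg_right (sq_nonneg _))
    exact Tendsto.congr' hev hA

lemma stmt7_mono (t : ℝ) (μ : Measure ℝ) [IsFiniteMeasure μ] {u v : ℝ} (hu : 0 < u)
    (huv : u ≤ v) :
    ∫ x, ((t - x) ^ 2 + v ^ 2)⁻¹ ∂μ ≤ ∫ x, ((t - x) ^ 2 + u ^ 2)⁻¹ ∂μ := by
  have hv : v ≠ 0 := ne_of_gt (lt_of_lt_of_le hu huv)
  have hu' : u ≠ 0 := ne_of_gt hu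
  have h1 : Integrable (fun x => ((t - x) ^ 2 + v ^ 2)⁻¹) μ := by
    rw [← stmtFb_coe t v hv]; exact (stmtFb t v hv).integrable μ
  have h2 : Integrable (fun x => ((t - x) ^ 2 + u ^ 2)⁻¹) μ := by
    rw [← stmtFb_coe t u hu']; exact (stmtFb t u hu').integrable μ
  refine integral_mono h1 h2 fun x => ?_
  refine invAux_le (by positivity) ?_
  have : u ^ 2 ≤ v ^ 2 := pow_le_pow_left₀ hu.le huv 2
  linarith

lemma stmt7_one_mem (t : ℝ) (μ : Measure ℝ) [IsProbabilityMeasure μ] :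
    (1:ℝ) ∈ {v : ℝ | 0 ≤ v ∧ ∫ x, ((t - x) ^ 2 + v ^ 2)⁻¹ ∂μ ≤ 1} := by
  refine ⟨zero_le_one, ?_⟩
  have h1 : Integrable (fun x => ((t - x) ^ 2 + (1:ℝ) ^ 2)⁻¹) μ := by
    rw [← stmtFb_coe t 1 one_ne_zero]; exact (stmtFb t 1 one_ne_zero).integrable μ
  calc ∫ x, ((t - x) ^ 2 + (1:ℝ) ^ 2)⁻¹ ∂μ ≤ ∫ _x, (1:ℝ) ∂μ := by
        refine integral_mono h1 (integrable_const 1) fun x => ?_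
        have := invAux_le one_pos (by nlinarith [sq_nonneg (t - x)] : (1:ℝ) ≤ (t - x) ^ 2 + 1 ^ 2)
        simpa using this
    _ = 1 := by simp

lemma stmt7_strict (t : ℝ) (ν : Measure ℝ) [IsProbabilityMeasure ν] {a b : ℝ}
    (ha : 0 < a) (hab : a < b) :
    ∫ x, ((t - x) ^ 2 + b ^ 2)⁻¹ ∂ν < ∫ x, ((t - x) ^ 2 + a ^ 2)⁻¹ ∂ν := by
  have hb : b ≠ 0 := ne_of_gt (ha.trans hab)
  have ha' : a ≠ 0 := ne_of_gt ha
  have hIa : Integrable (fun x => ((t - x) ^ 2 + a ^ 2)⁻¹) ν := by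
    rw [← stmtFb_coe t a ha']; exact (stmtFb t a ha').integrable ν
  have hIb : Integrable (fun x => ((t - x) ^ 2 + b ^ 2)⁻¹) ν := by
    rw [← stmtFb_coe t b hb]; exact (stmtFb t b hb).integrable ν
  have hpt : ∀ x : ℝ, ((t - x) ^ 2 + b ^ 2)⁻¹ < ((t - x) ^ 2 + a ^ 2)⁻¹ := by
    intro x
    refine invAux_lt (by positivity) ?_
    have : a ^ 2 < b ^ 2 := pow_lt_pow_left₀ hab ha.le two_ne_zero
    linarith
  have hnonneg : 0 ≤ fun x : ℝ => ((t - x) ^ 2 + a ^ 2)⁻¹ - ((t - x) ^ 2 + b ^ 2)⁻¹ :=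
    fun x => by have := hpt x; simp only [Pi.zero_apply]; linarith
  have hint : Integrable (fun x : ℝ => ((t - x) ^ 2 + a ^ 2)⁻¹ - ((t - x) ^ 2 + b ^ 2)⁻¹) ν :=
    hIa.sub hIb
  have hsupp : Function.support
      (fun x : ℝ => ((t - x) ^ 2 + a ^ 2)⁻¹ - ((t - x) ^ 2 + b ^ 2)⁻¹) = Set.univ := by
    ext x
    simp only [Function.mem_support, Set.mem_univ, iff_true]
    have := hpt x
    intro h
    linarith [sub_eq_zero.mp h]
  have hpos : 0 < ∫ x, (((t - x) ^ 2 + a ^ 2)⁻¹ - ((t - x) ^ 2 + b ^ 2)⁻¹) ∂ν := by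
    rw [integral_pos_iff_support_of_nonneg hnonneg hint, hsupp]
    simp
  rw [integral_sub hIa hIb] at hpos
  linarith

/-- for every `t ∈ U_ν`, `v_N(t) → v_ν(t)` as `N → ∞`. -/
theorem stmt7
    (ν : Measure ℝ) [IsProbabilityMeasure ν] (hcomp : IsCompact (MeasSupp ν))
    (J r : ℕ) (θ : Fin J → ℝ) (k : Fin J → ℕ)
    (hθanti : StrictAnti θ) (hθsupp : ∀ j, θ j ∉ MeasSupp ν)
    (hkpos : ∀ j, 0 < k j) (hkr : ∑ j, k j = r)
    (β : ℕ → ℕ → ℝ) (μA : ℕ → Measure ℝ)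
    (hprob : ∀ N, IsProbabilityMeasure (μA N))
    (hdecomp : ∀ N, r ≤ N → μA N = (N : ℝ≥0∞)⁻¹ •
      ((∑ j, (k j : ℝ≥0∞) • Measure.dirac (θ j)) +
        ∑ i ∈ Finset.range (N - r), Measure.dirac (β N i)))
    (hweak : ∀ f : BoundedContinuousFunction ℝ ℝ,
      Tendsto (fun N => ∫ x, f x ∂(μA N)) atTop (𝓝 (∫ x, f x ∂ν)))
    (hβ : ∀ ε > 0, ∀ᶠ N in atTop, ∀ i ∈ Finset.range (N - r),
      Metric.infDist (β N i) (MeasSupp ν) < ε)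
    (t : ℝ) (ht : t ∈ USet ν) :
    Tendsto (fun N => vF (μA N) t) atTop (𝓝 (vF ν t)) := by
  classical
  have hv₀pos : 0 < vF ν t := ht
  set v₀ := vF ν t with hv₀def
  -- the defining sets
  set S : Measure ℝ → Set ℝ :=
    fun μ => {v : ℝ | 0 ≤ v ∧ ∫ x, ((t - x) ^ 2 + v ^ 2)⁻¹ ∂μ ≤ 1} with hSdef
  have hvS : ∀ μ : Measure ℝ, vF μ t = sInf (S μ) := fun μ => rfl
  have hBdd : ∀ μ : Measure ℝ, BddBelow (S μ) := fun μ => ⟨0, fun v hv => hv.1⟩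
  -- 0 is not in S ν
  have h0not : (0:ℝ) ∉ S ν := by
    intro h
    have := csInf_le (hBdd ν) h
    rw [← hvS ν] at this
    exact absurd this (not_le.2 hv₀pos)
  have hI0 : 1 < ∫ x, ((t - x) ^ 2 + (0:ℝ) ^ 2)⁻¹ ∂ν := by
    by_contra h
    exact h0not ⟨le_rfl, not_lt.1 h⟩
  have hInt0 : Integrable (fun x => ((t - x) ^ 2 + (0:ℝ) ^ 2)⁻¹) ν := by
    by_contra h
    rw [integral_undef h] at hI0
    linarith
  -- upper bound: for v > v₀ the integral is ≤ 1
  have hub : ∀ v : ℝ, v₀ < v → ∫ x, ((t - x) ^ 2 + v ^ 2)⁻¹ ∂ν ≤ 1 := by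
    intro v hv
    have hlt : sInf (S ν) < v := by rw [← hvS ν]; exact hv
    obtain ⟨u, huS, hult⟩ := (csInf_lt_iff (hBdd ν) ⟨1, stmt7_one_mem t ν⟩).1 hlt
    have hu0 : 0 < u := by
      rcases eq_or_lt_of_le huS.1 with h | h
      · exact absurd (h ▸ huS) h0not
      · exact h
    exact (stmt7_mono t ν hu0 hult.le).trans huS.2
  -- strictly below 1 above v₀
  have hup : ∀ ε : ℝ, 0 < ε → ∫ x, ((t - x) ^ 2 + (v₀ + ε) ^ 2)⁻¹ ∂ν < 1 := by
    intro ε hε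
    have h1 : (0:ℝ) < v₀ + ε / 2 := by linarith
    have h2 : v₀ + ε / 2 < v₀ + ε := by linarith
    exact (stmt7_strict t ν h1 h2).trans_le (hub _ (by linarith))
  -- monotone convergence for the g's
  have htendG : Tendsto (fun n => ∫ x, stmtG t n x ∂ν) atTop
      (𝓝 (∫ x, ((t - x) ^ 2 + (0:ℝ) ^ 2)⁻¹ ∂ν)) := by
    refine integral_tendsto_of_tendsto_of_monotone (fun n => (stmtG t n).integrable ν) hInt0
      (ae_of_all _ fun x => ?_) (ae_of_all _ fun x => stmtG_tendsto t x)
    exact fun m n hmn => stmtG_mono t x hmn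
  obtain ⟨n₀, hn₀⟩ : ∃ n₀, 1 < ∫ x, stmtG t n₀ x ∂ν :=
    (htendG.eventually_const_lt hI0).exists
  -- integrability of the junk integrand w.r.t. μA N
  have hmeas0 : Measurable (fun x : ℝ => ((t - x) ^ 2 + (0:ℝ) ^ 2)⁻¹) := by fun_prop
  have hIntμA : ∀ N, max r 1 ≤ N →
      Integrable (fun x : ℝ => ((t - x) ^ 2 + (0:ℝ) ^ 2)⁻¹) (μA N) := by
    intro N hN
    rw [hdecomp N (le_trans (le_max_left _ _) hN)]
    have hNne : ((N:ℝ≥0∞))⁻¹ ≠ ⊤ := by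
      have : (1:ℕ) ≤ N := le_trans (le_max_right _ _) hN
      simp [ENNReal.inv_ne_top]
      omega
    refine Integrable.smul_measure ?_ hNne
    refine Integrable.add_measure ?_ ?_
    · rw [integrable_finset_sum_measure]
      intro j _
      exact (stmt7_integrable_dirac hmeas0 _).smul_measure (by simp)
    · rw [integrable_finset_sum_measure]
      intro i _
      exact stmt7_integrable_dirac hmeas0 _
  -- conclusion
  rw [tendsto_order]
  constructor
  · -- lower bound
    intro a ha
    rcases lt_or_ge a 0 with ha0 | ha0
    · refine Eventually.of_forall fun N => lt_of_lt_of_le ha0 ?_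
      rw [hvS]
      exact Real.sInf_nonneg fun v hv => hv.1
    · set w := (a + v₀) / 2 with hwdef
      have hw0 : 0 < w := by rw [hwdef]; linarith
      have hwa : a < w := by rw [hwdef]; linarith
      have hwv : w < v₀ := by rw [hwdef]; linarith
      have hwne : w ≠ 0 := ne_of_gt hw0
      have hgt : 1 < ∫ x, ((t - x) ^ 2 + w ^ 2)⁻¹ ∂ν := by
        by_contra h
        push_neg at h
        have hmem : w ∈ S ν := ⟨hw0.le, h⟩
        have := csInf_le (hBdd ν) hmem
        rw [← hvS ν] at this
        exact absurd this (not_le.2 hwv)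
      have E2 : ∀ᶠ N in atTop, 1 < ∫ x, ((t - x) ^ 2 + w ^ 2)⁻¹ ∂(μA N) := by
        have h := hweak (stmtFb t w hwne)
        simp only [stmtFb_coe] at h
        exact h.eventually_const_lt hgt
      have E3 : ∀ᶠ N in atTop, 1 < ∫ x, stmtG t n₀ x ∂(μA N) :=
        (hweak (stmtG t n₀)).eventually_const_lt hn₀
      have E4 : ∀ᶠ N in atTop, max r 1 ≤ N := eventually_ge_atTop _
      filter_upwards [E2, E3, E4] with N h2 h3 h4
      have hprobN := hprob N
      refine lt_of_lt_of_le hwa ?_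
      rw [hvS]
      refine le_csInf ⟨1, stmt7_one_mem t (μA N)⟩ ?_
      rintro u ⟨hu0, huI⟩
      by_contra hcon
      push_neg at hcon
      rcases eq_or_lt_of_le hu0 with hu0' | hupos
      · -- u = 0
        have huI0 : ∫ x, ((t - x) ^ 2 + (0:ℝ) ^ 2)⁻¹ ∂(μA N) ≤ 1 := by
          rw [hu0']; exact huI
        have hle : ∫ x, stmtG t n₀ x ∂(μA N) ≤
            ∫ x, ((t - x) ^ 2 + (0:ℝ) ^ 2)⁻¹ ∂(μA N) :=
          integral_mono ((stmtG t n₀).integrable _) (hIntμA N h4) (stmtG_le t n₀)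
        linarith
      · -- 0 < u < w
        have hle := stmt7_mono t (μA N) hupos hcon.le
        linarith
  · -- upper bound
    intro b hb
    have hε : 0 < (b - v₀) / 2 := by linarith
    have hlt1 := hup _ hε
    have hne : v₀ + (b - v₀) / 2 ≠ 0 := by positivity
    have E1 : ∀ᶠ N in atTop,
        ∫ x, ((t - x) ^ 2 + (v₀ + (b - v₀) / 2) ^ 2)⁻¹ ∂(μA N) < 1 := by
      have h := hweak (stmtFb t _ hne)
      simp only [stmtFb_coe] at h
      exact h.eventually_lt_const hlt1
    filter_upwards [E1] with N h1
    have : vF (μA N) t ≤ v₀ + (b - v₀) / 2 := by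
      rw [hvS]
      exact csInf_le (hBdd _) ⟨by positivity, h1.le⟩
    linarith
end

section
/- For every t ∈ U_ν such that t ∈ ℝ \ (supp(ν) ∪ Θ), Ψ_N(t) converges to Ψ_ν(t) as N → ∞. -/
open MeasureTheory Filter Topology Set
open scoped ENNReal

namespace Stmt8Aux

/-- kernel `g_v(x) = ((t-x)^2+v^2)⁻¹` -/
noncomputable def gK (t v x : ℝ) : ℝ := ((t - x) ^ 2 + v ^ 2)⁻¹
/-- kernel `f_v(x) = (t-x)/((t-x)^2+v^2)` -/
noncomputable def fK (t v x : ℝ) : ℝ := (t - x) / ((t - x) ^ 2 + v ^ 2)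

lemma gK_meas (t v : ℝ) : Measurable (gK t v) := by
  unfold gK; fun_prop

lemma fK_meas (t v : ℝ) : Measurable (fK t v) := by
  unfold fK; fun_prop

lemma denom_pos {t v x : ℝ} (hv : v ≠ 0) : 0 < (t - x) ^ 2 + v ^ 2 := by positivity

lemma gK_cont (t : ℝ) {v : ℝ} (hv : v ≠ 0) : Continuous (gK t v) := by
  unfold gK
  exact Continuous.inv₀ (by continuity) fun x => (denom_pos hv).ne'

lemma fK_cont (t : ℝ) {v : ℝ} (hv : v ≠ 0) : Continuous (fK t v) := by
  unfold fK
  exact Continuous.div (by continuity) (by continuity) fun x => (denom_pos hv).ne'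

lemma gK_nonneg (t v x : ℝ) : 0 ≤ gK t v x := by unfold gK; positivity

lemma gK_bound (t : ℝ) {v : ℝ} (hv : 0 < v) (x : ℝ) : ‖gK t v x‖ ≤ (v ^ 2)⁻¹ := by
  rw [Real.norm_eq_abs, abs_of_nonneg (gK_nonneg t v x)]
  unfold gK
  exact inv_anti₀ (by positivity) (by nlinarith)

lemma gK_le_one (t x : ℝ) : ‖gK t 1 x‖ ≤ 1 := by
  simpa using gK_bound t one_pos x

lemma gK_anti {t v w x : ℝ} (h0 : 0 < (t - x) ^ 2 + v ^ 2) (hvw : v ≤ w) (hv : 0 ≤ v) :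
    gK t w x ≤ gK t v x := by
  unfold gK
  exact inv_anti₀ h0 (by nlinarith)

lemma fK_bound (t : ℝ) {v : ℝ} (hv : 0 < v) (x : ℝ) : ‖fK t v x‖ ≤ (2 * v)⁻¹ := by
  rw [Real.norm_eq_abs]
  unfold fK
  rw [abs_div, abs_of_pos (denom_pos hv.ne')]
  rw [inv_eq_one_div, div_le_div_iff₀ (denom_pos hv.ne') (by positivity)]
  nlinarith [sq_nonneg (|t - x| - v), sq_abs (t - x), abs_nonneg (t - x)]

lemma fK_diff_bound (t : ℝ) {v w : ℝ} (hv : 0 < v) (hw : 0 < w) (x : ℝ) :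
    ‖fK t v x - fK t w x‖ ≤ |v ^ 2 - w ^ 2| * ((2 * w)⁻¹ * (v ^ 2)⁻¹) := by
  have hdv := denom_pos (x := x) (t := t) hv.ne'
  have hdw := denom_pos (x := x) (t := t) hw.ne'
  have key : fK t v x - fK t w x
      = (t - x) / ((t - x) ^ 2 + w ^ 2) * ((w ^ 2 - v ^ 2) / ((t - x) ^ 2 + v ^ 2)) := by
    unfold fK; field_simp; ring
  rw [key, Real.norm_eq_abs, abs_mul, abs_div, abs_div, abs_of_pos hdw, abs_of_pos hdv]
  have h1 : |t - x| / ((t - x) ^ 2 + w ^ 2) ≤ (2 * w)⁻¹ := by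
    have := fK_bound t hw x
    rw [Real.norm_eq_abs] at this
    unfold fK at this
    rwa [abs_div, abs_of_pos hdw] at this
  have h2' : |w ^ 2 - v ^ 2| / ((t - x) ^ 2 + v ^ 2) ≤ |v ^ 2 - w ^ 2| * (v ^ 2)⁻¹ := by
    rw [abs_sub_comm, div_eq_mul_inv]
    exact mul_le_mul_of_nonneg_left (inv_anti₀ (by positivity) (by nlinarith)) (abs_nonneg _)
  calc |t - x| / ((t - x) ^ 2 + w ^ 2) * (|w ^ 2 - v ^ 2| / ((t - x) ^ 2 + v ^ 2))
      ≤ (2 * w)⁻¹ * (|v ^ 2 - w ^ 2| * (v ^ 2)⁻¹) :=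
        mul_le_mul h1 h2' (by positivity) (by positivity)
    _ = |v ^ 2 - w ^ 2| * ((2 * w)⁻¹ * (v ^ 2)⁻¹) := by ring

lemma integrable_of_bound {μ : Measure ℝ} [IsFiniteMeasure μ] {f : ℝ → ℝ}
    (hm : Measurable f) (C : ℝ) (h : ∀ x, ‖f x‖ ≤ C) : Integrable f μ :=
  (integrable_const C).mono' hm.aestronglyMeasurable (ae_of_all _ h)

lemma integrable_dirac_meas {f : ℝ → ℝ} (hm : Measurable f) (a : ℝ) :
    Integrable f (Measure.dirac a) := by
  refine ⟨hm.aestronglyMeasurable, ?_⟩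
  have : HasFiniteIntegral f (Measure.dirac a) := by
    show ∫⁻ x, (‖f x‖₊ : ℝ≥0∞) ∂(Measure.dirac a) < ∞
    rw [lintegral_dirac]
    exact ENNReal.coe_lt_top
  exact this

/-- the "defining set" for `vF` -/
def SSet (μ : Measure ℝ) (t : ℝ) : Set ℝ :=
  {v : ℝ | 0 ≤ v ∧ ∫ x, ((t - x) ^ 2 + v ^ 2)⁻¹ ∂μ ≤ 1}

lemma vF_eq_sInf (μ : Measure ℝ) (t : ℝ) : vF μ t = sInf (SSet μ t) := rfl

lemma gK_integral_eq (μ : Measure ℝ) (t v : ℝ) :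
    ∫ x, ((t - x) ^ 2 + v ^ 2)⁻¹ ∂μ = ∫ x, gK t v x ∂μ := rfl

lemma one_mem_SSet (μ : Measure ℝ) [IsProbabilityMeasure μ] (t : ℝ) : (1:ℝ) ∈ SSet μ t := by
  refine ⟨zero_le_one, ?_⟩
  rw [gK_integral_eq]
  calc ∫ x, gK t 1 x ∂μ ≤ ∫ _x, (1:ℝ) ∂μ := by
        refine integral_mono ?_ (integrable_const 1) ?_
        · exact integrable_of_bound (gK_meas t 1) 1 (gK_le_one t)
        · intro x
          have := gK_le_one t x
          rwa [Real.norm_eq_abs, abs_of_nonneg (gK_nonneg t 1 x)] at this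
    _ = 1 := by simp

lemma SSet_bddBelow (μ : Measure ℝ) (t : ℝ) : BddBelow (SSet μ t) :=
  ⟨0, fun _ h => h.1⟩

lemma measSupp_isClosed (ν : Measure ℝ) : IsClosed (MeasSupp ν) := by
  rw [← isOpen_compl_iff, isOpen_iff_mem_nhds]
  intro x hx
  simp only [MeasSupp, mem_compl_iff, mem_setOf_eq, not_forall] at hx
  obtain ⟨U, hU, hU0⟩ := hx
  push_neg at hU0
  obtain ⟨V, hVU, hVopen, hxV⟩ := mem_nhds_iff.mp hU
  refine mem_of_superset (hVopen.mem_nhds hxV) ?_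
  intro y hy
  simp only [MeasSupp, mem_compl_iff, mem_setOf_eq, not_forall]
  exact ⟨V, hVopen.mem_nhds hy, by push_neg; exact measure_mono_null hVU hU0⟩

lemma measSupp_compl_null (ν : Measure ℝ) : ν (MeasSupp ν)ᶜ = 0 := by
  have hch : ∀ x : ↥(MeasSupp ν)ᶜ, ∃ V : Set ℝ, IsOpen V ∧ (x:ℝ) ∈ V ∧ ν V = 0 := by
    rintro ⟨x, hx⟩
    simp only [MeasSupp, mem_compl_iff, mem_setOf_eq, not_forall] at hx
    obtain ⟨U, hU, hU0⟩ := hx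
    push_neg at hU0
    obtain ⟨V, hVU, hVopen, hxV⟩ := mem_nhds_iff.mp hU
    exact ⟨V, hVopen, hxV, measure_mono_null hVU hU0⟩
  choose V hVopen hVmem hVnull using hch
  obtain ⟨T, hTc, hTU⟩ := TopologicalSpace.isOpen_iUnion_countable V hVopen
  have hsub : (MeasSupp ν)ᶜ ⊆ ⋃ i ∈ T, V i := by
    rw [hTU]
    intro x hx
    exact mem_iUnion.mpr ⟨⟨x, hx⟩, hVmem ⟨x, hx⟩⟩
  refine measure_mono_null hsub ?_
  exact (measure_biUnion_null_iff hTc).mpr fun i _ => hVnull i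

lemma measSupp_nonempty (ν : Measure ℝ) [IsProbabilityMeasure ν] : (MeasSupp ν).Nonempty := by
  by_contra h
  rw [not_nonempty_iff_eq_empty] at h
  have := measSupp_compl_null ν
  rw [h, compl_empty] at this
  simp at this

end Stmt8Aux

open Stmt8Aux

/-- for every `t ∈ U_ν` with `t ∉ supp(ν) ∪ Θ`, `Ψ_N(t) → Ψ_ν(t)`. -/
theorem stmt8
    (ν : Measure ℝ) [IsProbabilityMeasure ν] (hcomp : IsCompact (MeasSupp ν))
    (J r : ℕ) (θ : Fin J → ℝ) (k : Fin J → ℕ)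
    (hθanti : StrictAnti θ) (hθsupp : ∀ j, θ j ∉ MeasSupp ν)
    (hkpos : ∀ j, 0 < k j) (hkr : ∑ j, k j = r)
    (β : ℕ → ℕ → ℝ) (μA : ℕ → Measure ℝ)
    (hprob : ∀ N, IsProbabilityMeasure (μA N))
    (hdecomp : ∀ N, r ≤ N → μA N = (N : ℝ≥0∞)⁻¹ •
      ((∑ j, (k j : ℝ≥0∞) • Measure.dirac (θ j)) +
        ∑ i ∈ Finset.range (N - r), Measure.dirac (β N i)))
    (hweak : ∀ f : BoundedContinuousFunction ℝ ℝ,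
      Tendsto (fun N => ∫ x, f x ∂(μA N)) atTop (𝓝 (∫ x, f x ∂ν)))
    (hβ : ∀ ε > 0, ∀ᶠ N in atTop, ∀ i ∈ Finset.range (N - r),
      Metric.infDist (β N i) (MeasSupp ν) < ε)
    (t : ℝ) (ht : t ∈ USet ν) (ht' : t ∉ MeasSupp ν ∪ Set.range θ) :
    Tendsto (fun N => PsiF (μA N) t) atTop (𝓝 (PsiF ν t)) := by
  classical
  have hv0pos : 0 < vF ν t := ht
  set v0 := vF ν t with hv0def
  have htsupp : t ∉ MeasSupp ν := fun h => ht' (Or.inl h)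
  have htθ : ∀ j, θ j ≠ t := fun j h => ht' (Or.inr ⟨j, h⟩)
  have hne : (MeasSupp ν).Nonempty := measSupp_nonempty ν
  have hd : 0 < Metric.infDist t (MeasSupp ν) :=
    ((measSupp_isClosed ν).notMem_iff_infDist_pos hne).mp htsupp
  set d := Metric.infDist t (MeasSupp ν) with hddef
  -- Step B : eventually all atoms differ from t
  have hβne : ∀ᶠ N in atTop, ∀ i ∈ Finset.range (N - r), β N i ≠ t := by
    filter_upwards [hβ (d / 2) (by positivity)] with N hN i hi heq
    obtain ⟨y, hy, hdist⟩ := (Metric.infDist_lt_iff hne).mp (hN i hi)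
    have h1 : d ≤ dist t y := Metric.infDist_le_dist_of_mem hy
    rw [heq] at hdist
    linarith
  -- Step C : eventually a.e. x ≠ t
  have haect : ∀ᶠ N in atTop, ∀ᵐ x ∂(μA N), x ≠ t := by
    filter_upwards [hβne, eventually_ge_atTop r] with N hb hrN
    have hset : μA N {t} = 0 := by
      rw [hdecomp N hrN]
      simp only [Measure.smul_apply, Measure.add_apply, smul_eq_mul]
      have h1 : (∑ j, (k j : ℝ≥0∞) • Measure.dirac (θ j)) {t} = 0 := by
        rw [Measure.finset_sum_apply]
        refine Finset.sum_eq_zero fun j _ => ?_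
        simp [Measure.smul_apply, Measure.dirac_apply' _ (measurableSet_singleton t),
          Set.indicator_apply, htθ j]
      have h2 : (∑ i ∈ Finset.range (N - r), Measure.dirac (β N i)) {t} = 0 := by
        rw [Measure.finset_sum_apply]
        refine Finset.sum_eq_zero fun i hi => ?_
        simp [Measure.dirac_apply' _ (measurableSet_singleton t),
          Set.indicator_apply, hb i hi]
      rw [h1, h2]; simp
    rw [ae_iff]
    have : {x : ℝ | ¬ x ≠ t} = {t} := by ext x; simp
    rw [this]; exact hset
  -- Step E : all measurable functions are integrable for μA N, N large
  have hintAll : ∀ N, r ≤ N → 1 ≤ N → ∀ f : ℝ → ℝ, Measurable f → Integrable f (μA N) := by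
    intro N hrN h1N f hf
    rw [hdecomp N hrN]
    refine Integrable.smul_measure ?_
      (ENNReal.inv_ne_top.mpr (by exact_mod_cast Nat.one_le_iff_ne_zero.mp h1N))
    rw [integrable_add_measure]
    constructor
    · rw [integrable_finset_sum_measure]
      intro j _
      exact (integrable_dirac_meas hf _).smul_measure (by simp)
    · rw [integrable_finset_sum_measure]
      intro i _
      exact integrable_dirac_meas hf _
  -- Step F : lower bound
  have hlow : ∀ ε > (0:ℝ), ∀ᶠ N in atTop, v0 - ε < vF (μA N) t := by
    intro ε hε
    set v₁ := v0 - min (ε / 2) (v0 / 2) with hv₁def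
    have hv₁pos : 0 < v₁ := by
      have h := min_le_right (ε / 2) (v0 / 2)
      rw [hv₁def]
      linarith [hv0pos]
    have hv₁lt : v₁ < v0 := by
      have : 0 < min (ε / 2) (v0 / 2) := lt_min (by linarith) (by linarith)
      rw [hv₁def]; linarith
    have hv₁gt : v0 - ε < v₁ := by
      have : min (ε / 2) (v0 / 2) ≤ ε / 2 := min_le_left _ _
      rw [hv₁def]; linarith
    have hnot : v₁ ∉ SSet ν t := by
      intro h
      have : v0 ≤ v₁ := csInf_le (SSet_bddBelow ν t) h
      linarith
    have hgt : 1 < ∫ x, gK t v₁ x ∂ν := by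
      by_contra h
      push_neg at h
      exact hnot ⟨hv₁pos.le, by rw [gK_integral_eq]; exact h⟩
    set F₁ := BoundedContinuousFunction.ofNormedAddCommGroup (gK t v₁)
      (gK_cont t hv₁pos.ne') ((v₁ ^ 2)⁻¹) (gK_bound t hv₁pos) with hF₁
    have hF₁x : ∀ x, F₁ x = gK t v₁ x := fun x => rfl
    have hconv := hweak F₁
    simp only [hF₁x] at hconv
    have hev1 : ∀ᶠ N in atTop, 1 < ∫ x, gK t v₁ x ∂(μA N) :=
      hconv.eventually (eventually_gt_nhds hgt)
    filter_upwards [hev1, haect, eventually_ge_atTop r, eventually_ge_atTop 1]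
      with N h1 h2 hrN h1N
    haveI := hprob N
    have hmem : ∀ w ∈ SSet (μA N) t, v₁ ≤ w := by
      intro w hw
      by_contra hlt
      push_neg at hlt
      have hint1 : Integrable (gK t v₁) (μA N) :=
        integrable_of_bound (gK_meas _ _) _ (gK_bound t hv₁pos)
      have hintw : Integrable (gK t w) (μA N) := hintAll N hrN h1N _ (gK_meas t w)
      have hmono : ∫ x, gK t v₁ x ∂(μA N) ≤ ∫ x, gK t w x ∂(μA N) := by
        refine integral_mono_ae hint1 hintw ?_
        filter_upwards [h2] with x hx
        have h0 : 0 < (t - x) ^ 2 + w ^ 2 := by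
          have hsub : t - x ≠ 0 := sub_ne_zero.mpr (Ne.symm hx)
          have h1 : 0 < (t - x) ^ 2 :=
            lt_of_le_of_ne (sq_nonneg _) (Ne.symm (pow_ne_zero 2 hsub))
          nlinarith [sq_nonneg w]
        exact gK_anti h0 hlt.le hw.1
      have hle := hw.2
      rw [gK_integral_eq] at hle
      linarith
    have hnonempty : (SSet (μA N) t).Nonempty := ⟨1, one_mem_SSet (μA N) t⟩
    calc v0 - ε < v₁ := hv₁gt
      _ ≤ vF (μA N) t := le_csInf hnonempty hmem
  -- Step G : upper bound
  have hupp : ∀ ε > (0:ℝ), ∀ᶠ N in atTop, vF (μA N) t < v0 + ε := by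
    intro ε hε
    set v₂ := v0 + ε / 3 with hv₂def
    set v₂' := v0 + 2 * ε / 3 with hv₂'def
    have hv₂pos : 0 < v₂ := by rw [hv₂def]; linarith
    have hv₂'pos : 0 < v₂' := by rw [hv₂'def]; linarith
    have hv₂lt : v₂ < v₂' := by rw [hv₂def, hv₂'def]; linarith
    obtain ⟨w, hwS, hwlt⟩ :=
      exists_lt_of_csInf_lt ⟨1, one_mem_SSet ν t⟩ (show sInf (SSet ν t) < v₂ by
        rw [← vF_eq_sInf]; rw [hv₂def]; linarith)
    have hw0 : 0 < w := by
      have : v0 ≤ w := csInf_le (SSet_bddBelow ν t) hwS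
      linarith
    have hintw : Integrable (gK t w) ν := integrable_of_bound (gK_meas t w) _ (gK_bound t hw0)
    have hint2 : Integrable (gK t v₂) ν := integrable_of_bound (gK_meas t v₂) _ (gK_bound t hv₂pos)
    have hint2' : Integrable (gK t v₂') ν :=
      integrable_of_bound (gK_meas t v₂') _ (gK_bound t hv₂'pos)
    have h2le : ∫ x, gK t v₂ x ∂ν ≤ 1 := by
      have hmono : ∫ x, gK t v₂ x ∂ν ≤ ∫ x, gK t w x ∂ν := by
        refine integral_mono hint2 hintw fun x => ?_
        exact gK_anti (denom_pos hw0.ne') hwlt.le hw0.le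
      have := hwS.2
      rw [gK_integral_eq] at this
      linarith
    have hdiffpos : 0 < ∫ x, (gK t v₂ x - gK t v₂' x) ∂ν := by
      rw [integral_pos_iff_support_of_nonneg_ae
        (ae_of_all _ fun x => sub_nonneg.mpr (gK_anti (denom_pos hv₂pos.ne') hv₂lt.le hv₂pos.le))
        (hint2.sub hint2')]
      have hsupp : Function.support (fun x => gK t v₂ x - gK t v₂' x) = univ := by
        ext x
        simp only [Function.mem_support, mem_univ, iff_true]
        have : gK t v₂' x < gK t v₂ x := by
          unfold gK
          apply inv_strictAnti₀ (denom_pos hv₂pos.ne')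
          nlinarith [sq_nonneg (t - x)]
        exact sub_ne_zero.mpr this.ne'
      rw [hsupp]
      simp
    have hlt1 : ∫ x, gK t v₂' x ∂ν < 1 := by
      rw [integral_sub hint2 hint2'] at hdiffpos
      linarith
    set F₂ := BoundedContinuousFunction.ofNormedAddCommGroup (gK t v₂')
      (gK_cont t hv₂'pos.ne') ((v₂' ^ 2)⁻¹) (gK_bound t hv₂'pos) with hF₂
    have hF₂x : ∀ x, F₂ x = gK t v₂' x := fun x => rfl
    have hconv := hweak F₂
    simp only [hF₂x] at hconv
    have hev : ∀ᶠ N in atTop, ∫ x, gK t v₂' x ∂(μA N) < 1 :=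
      hconv.eventually (eventually_lt_nhds hlt1)
    filter_upwards [hev] with N hN
    have hmem : v₂' ∈ SSet (μA N) t := ⟨hv₂'pos.le, by rw [gK_integral_eq]; exact hN.le⟩
    calc vF (μA N) t ≤ v₂' := csInf_le (SSet_bddBelow _ t) hmem
      _ < v0 + ε := by rw [hv₂'def]; linarith
  -- Step H : convergence of vF
  have htv : Tendsto (fun N => vF (μA N) t) atTop (𝓝 v0) := by
    rw [Metric.tendsto_nhds]
    intro ε hε
    filter_upwards [hlow ε hε, hupp ε hε] with N h1 h2
    rw [Real.dist_eq, abs_sub_lt_iff]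
    constructor <;> linarith
  -- Step J : final convergence
  have key : Tendsto (fun N => ∫ x, fK t (vF (μA N) t) x ∂(μA N)) atTop
      (𝓝 (∫ x, fK t v0 x ∂ν)) := by
    set F0 := BoundedContinuousFunction.ofNormedAddCommGroup (fK t v0)
      (fK_cont t hv0pos.ne') ((2 * v0)⁻¹) (fK_bound t hv0pos) with hF0
    have hF0x : ∀ x, F0 x = fK t v0 x := fun x => rfl
    have hconv0 := hweak F0
    simp only [hF0x] at hconv0
    rw [tendsto_iff_dist_tendsto_zero]
    set C : ℝ := (2 * v0)⁻¹ * ((v0 / 2) ^ 2)⁻¹ with hC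
    have hb : ∀ᶠ N in atTop, dist (∫ x, fK t (vF (μA N) t) x ∂(μA N)) (∫ x, fK t v0 x ∂ν)
        ≤ |vF (μA N) t ^ 2 - v0 ^ 2| * C
          + dist (∫ x, fK t v0 x ∂(μA N)) (∫ x, fK t v0 x ∂ν) := by
      filter_upwards [hlow (v0 / 2) (by positivity)] with N hN
      haveI := hprob N
      have hvN : 0 < v0 / 2 := by positivity
      have hvNpos : v0 / 2 < vF (μA N) t := by linarith
      have hintN : Integrable (fK t (vF (μA N) t)) (μA N) :=
        integrable_of_bound (fK_meas _ _) _ (fK_bound t (by linarith))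
      have hint0 : Integrable (fK t v0) (μA N) :=
        integrable_of_bound (fK_meas _ _) _ (fK_bound t hv0pos)
      refine le_trans (dist_triangle _ (∫ x, fK t v0 x ∂(μA N)) _) ?_
      have hfirst : dist (∫ x, fK t (vF (μA N) t) x ∂(μA N)) (∫ x, fK t v0 x ∂(μA N))
          ≤ |vF (μA N) t ^ 2 - v0 ^ 2| * C := by
        rw [Real.dist_eq, ← integral_sub hintN hint0]
        have hbound : ∀ x, ‖fK t (vF (μA N) t) x - fK t v0 x‖
            ≤ |vF (μA N) t ^ 2 - v0 ^ 2| * C := fun x => by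
          refine le_trans (fK_diff_bound t (by linarith) hv0pos x) ?_
          rw [hC]
          have h1 : ((vF (μA N) t) ^ 2)⁻¹ ≤ ((v0 / 2) ^ 2)⁻¹ :=
            inv_anti₀ (by positivity) (by nlinarith)
          have h2 : (0:ℝ) ≤ (2 * v0)⁻¹ := by positivity
          have h3 : (0:ℝ) ≤ |vF (μA N) t ^ 2 - v0 ^ 2| := abs_nonneg _
          nlinarith [mul_le_mul_of_nonneg_left h1 h2]
        calc |∫ x, (fK t (vF (μA N) t) x - fK t v0 x) ∂(μA N)|
            ≤ |vF (μA N) t ^ 2 - v0 ^ 2| * C * (μA N univ).toReal := by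
              rw [← Real.norm_eq_abs]
              exact norm_integral_le_of_norm_le_const (ae_of_all _ hbound)
          _ = |vF (μA N) t ^ 2 - v0 ^ 2| * C := by simp
      linarith [hfirst]
    have hg : Tendsto (fun N => |vF (μA N) t ^ 2 - v0 ^ 2| * C
        + dist (∫ x, fK t v0 x ∂(μA N)) (∫ x, fK t v0 x ∂ν)) atTop (𝓝 0) := by
      have t1 : Tendsto (fun N => |vF (μA N) t ^ 2 - v0 ^ 2| * C) atTop (𝓝 0) := by
        have := (((htv.pow 2).sub_const (v0 ^ 2)).abs).mul_const C
        simpa using this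
      have t2 : Tendsto (fun N => dist (∫ x, fK t v0 x ∂(μA N)) (∫ x, fK t v0 x ∂ν))
          atTop (𝓝 0) := tendsto_iff_dist_tendsto_zero.mp hconv0
      simpa using t1.add t2
    exact squeeze_zero' (Eventually.of_forall fun N => dist_nonneg) hb hg
  have : Tendsto (fun N => t + ∫ x, fK t (vF (μA N) t) x ∂(μA N)) atTop
      (𝓝 (t + ∫ x, fK t v0 x ∂ν)) := key.const_add t
  exact this
end
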